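/- arXiv:2505.13980 — 7 statements merged into one kernel-verified Lean document; each statement's English description precedes it below -/
import Mathlib

section
/- Let p, q ∈ ℝ[s] with q ≠ 0, deg p ≤ deg q, and q(z) ≠ 0 for every z ∈ ℂ with Re z ≥ 0 (evaluating q at complex points through the embedding ℝ ↪ ℂ). Then the function z ↦ p(z)/q(z) is bounded on the open right half-plane {z ∈ ℂ | Re z > 0}, and sup_{Re z > 0} |p(z)/q(z)| = sup_{ω ∈ ℝ} |p(iω)/q(iω)|. -/
open Polynomial Filter Asymptotics Metric Complex Bornology Set Topology

lemma auxTendsto (r : Polynomial ℂ) (n : ℕ) (h : r.natDegree ≤ n) :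
    Tendsto (fun z : ℂ => r.eval z / z ^ n) (cobounded ℂ) (𝓝 (r.coeff n)) := by
  have key : Tendsto (fun z : ℂ => ∑ i ∈ Finset.range (n + 1), r.coeff i * (z ^ (n - i))⁻¹)
      (cobounded ℂ) (𝓝 (∑ i ∈ Finset.range (n + 1), if i = n then r.coeff n else 0)) := by
    refine tendsto_finset_sum _ fun i hi => ?_
    rcases eq_or_ne i n with rfl | hne
    · simpa using tendsto_const_nhds
    · have hlt : i < n := lt_of_le_of_ne (Nat.lt_succ_iff.mp (Finset.mem_range.mp hi)) hne
      have hpow : Tendsto (fun z : ℂ => z ^ (n - i)) (cobounded ℂ) (cobounded ℂ) := by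
        rw [← tendsto_norm_atTop_iff_cobounded]
        simpa [norm_pow, Function.comp_def] using
          (tendsto_pow_atTop (n := n - i) (by omega)).comp tendsto_norm_cobounded_atTop
      have hinv : Tendsto (fun z : ℂ => (z ^ (n - i))⁻¹) (cobounded ℂ) (𝓝 0) :=
        tendsto_inv₀_cobounded.comp hpow
      simpa [hne] using hinv.const_mul (r.coeff i)
  have hsum : (∑ i ∈ Finset.range (n + 1), if i = n then r.coeff n else 0) = r.coeff n := by
    simp [Finset.sum_ite_eq' (Finset.range (n + 1)) n]
  rw [hsum] at key
  refine key.congr' ?_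
  filter_upwards [eventually_ne_cobounded (0 : ℂ)] with z hz
  rw [eval_eq_sum_range' (Nat.lt_succ_of_le h), Finset.sum_div]
  refine Finset.sum_congr rfl fun i hi => ?_
  have hile : i ≤ n := Nat.lt_succ_iff.mp (Finset.mem_range.mp hi)
  have hzi : (z : ℂ) ^ i ≠ 0 := pow_ne_zero _ hz
  have hsplit : z ^ n = z ^ i * z ^ (n - i) := by
    rw [← pow_add, Nat.add_sub_cancel' hile]
  rw [hsplit]
  field_simp

/-- For a proper and stable real rational function `p/q` (i.e. `q ≠ 0`,
`deg p ≤ deg q`, and `q` has no complex root with nonnegative real part), the function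
`z ↦ p(z)/q(z)` is bounded on the open right half-plane, and its supremum there equals
the supremum of `|p(iω)/q(iω)|` over `ω ∈ ℝ`. -/
theorem stmt0 (p q : Polynomial ℝ) (hq : q ≠ 0) (hdeg : p.degree ≤ q.degree)
    (hstable : ∀ z : ℂ, 0 ≤ z.re → (Polynomial.aeval z) q ≠ 0) :
    BddAbove ((fun z : ℂ =>
        ‖(Polynomial.aeval z) p / (Polynomial.aeval z) q‖) '' {z : ℂ | 0 < z.re}) ∧
    sSup ((fun z : ℂ =>
        ‖(Polynomial.aeval z) p / (Polynomial.aeval z) q‖) '' {z : ℂ | 0 < z.re}) =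
      ⨆ ω : ℝ, ‖(Polynomial.aeval ((ω : ℂ) * Complex.I)) p /
        (Polynomial.aeval ((ω : ℂ) * Complex.I)) q‖ := by
  set P : Polynomial ℂ := p.map (algebraMap ℝ ℂ) with hP
  set Q : Polynomial ℂ := q.map (algebraMap ℝ ℂ) with hQ
  have haev : ∀ (r : Polynomial ℝ) (z : ℂ), (aeval z) r = (r.map (algebraMap ℝ ℂ)).eval z := by
    intro r z; rw [aeval_def, eval_map]
  set f : ℂ → ℂ := fun z => P.eval z / Q.eval z with hf
  have hfe : ∀ z : ℂ, (aeval z) p / (aeval z) q = f z := by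
    intro z; rw [haev, haev, ← hP, ← hQ]
  have hQ0 : Q ≠ 0 := by
    simpa [hQ, Polynomial.map_eq_zero] using hq
  have hdegPQ : P.degree ≤ Q.degree := by
    rwa [hP, hQ, degree_map, degree_map]
  have hQz : ∀ z : ℂ, 0 ≤ z.re → Q.eval z ≠ 0 := by
    intro z hz; rw [← haev]; exact hstable z hz
  -- limit at infinity
  set n : ℕ := Q.natDegree with hn
  have hPn : P.natDegree ≤ n := natDegree_le_natDegree hdegPQ
  have hQc : Q.coeff n ≠ 0 := by
    rw [hn, ← leadingCoeff]; exact leadingCoeff_ne_zero.mpr hQ0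
  have hlim : Tendsto f (cobounded ℂ) (𝓝 (P.coeff n / Q.coeff n)) := by
    have := (auxTendsto P n hPn).div (auxTendsto Q n le_rfl) hQc
    refine this.congr' ?_
    filter_upwards [eventually_ne_cobounded (0 : ℂ)] with z hz
    simp only [Pi.div_apply]
    rw [div_div_div_cancel_right₀ (pow_ne_zero n hz)]
  -- global bound on closed half-plane
  obtain ⟨M, hM0, hM⟩ : ∃ M, 0 ≤ M ∧ ∀ z : ℂ, 0 ≤ z.re → ‖f z‖ ≤ M := by
    set L := P.coeff n / Q.coeff n
    have hev : ∀ᶠ z : ℂ in cobounded ℂ, ‖f z‖ ≤ ‖L‖ + 1 :=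
      (hlim.norm.eventually_lt_const (by linarith [norm_nonneg L])).mono fun z h => h.le
    obtain ⟨s, hs, hsP⟩ := hev.exists_mem
    obtain ⟨R, hR⟩ := (Metric.isBounded_iff_subset_closedBall (0:ℂ)).mp ((isCobounded_def.mpr hs).compl)
    set K : Set ℂ := {z | 0 ≤ z.re} ∩ closedBall 0 R
    have hKc : IsCompact K :=
      (isCompact_closedBall 0 R).inter_left (isClosed_le continuous_const continuous_re)
    have hfc : ContinuousOn (fun z => ‖f z‖) K := by
      refine ContinuousOn.norm ?_
      exact ContinuousOn.div (P.continuous.continuousOn) (Q.continuous.continuousOn)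
        fun z hz => hQz z hz.1
    obtain ⟨M1, hM1⟩ := hKc.exists_bound_of_continuousOn hfc
    refine ⟨max M1 (‖L‖ + 1), le_max_of_le_right (by positivity), fun z hz => ?_⟩
    by_cases hzK : z ∈ closedBall 0 R
    · exact le_max_of_le_left ((Real.norm_eq_abs _ ▸ le_abs_self _).trans (hM1 z ⟨hz, hzK⟩))
    · have : z ∈ s := by
        by_contra h
        exact hzK (hR h)
      exact le_max_of_le_right (hsP z this)
  -- axis sup
  set C : ℝ := ⨆ ω : ℝ, ‖f ((ω : ℂ) * Complex.I)‖ with hC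
  have hbddR : BddAbove (Set.range fun ω : ℝ => ‖f ((ω : ℂ) * Complex.I)‖) := by
    refine ⟨M, ?_⟩
    rintro x ⟨ω, rfl⟩
    simpa using hM _ (by simp)
  have him : ∀ x : ℝ, ‖f ((x : ℂ) * Complex.I)‖ ≤ C := fun x => by
    simpa using le_ciSup hbddR x
  -- Phragmen-Lindelof
  have hd : DiffContOnCl ℂ f {z : ℂ | 0 < z.re} := by
    constructor
    · intro z hz
      exact ((P.differentiable.differentiableAt.div
        Q.differentiable.differentiableAt (hQz z (le_of_lt hz))).differentiableWithinAt)
    · have hsub : closure {z : ℂ | 0 < z.re} ⊆ {z : ℂ | 0 ≤ z.re} :=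
        closure_minimal (fun z hz => (le_of_lt hz : (0:ℝ) ≤ z.re))
          (isClosed_le continuous_const continuous_re)
      have hcont2 : ContinuousOn f {z : ℂ | 0 ≤ z.re} :=
        ContinuousOn.div (P.continuous.continuousOn) (Q.continuous.continuousOn)
          fun z hz => hQz z hz
      exact hcont2.mono hsub
  have hexp : ∃ c < (2 : ℝ), ∃ B,
      f =O[cobounded ℂ ⊓ Filter.principal {z : ℂ | 0 < z.re}]
        fun z => Real.exp (B * ‖z‖ ^ c) := by
    refine ⟨1, one_lt_two, 0, ?_⟩
    refine IsBigO.of_bound M ?_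
    refine Filter.eventually_inf_principal.mpr (Filter.Eventually.of_forall fun z hz => ?_)
    simpa using hM z (le_of_lt hz)
  have hre : IsBoundedUnder (· ≤ ·) atTop fun x : ℝ => ‖f (x : ℂ)‖ := by
    refine ⟨M, ?_⟩
    rw [Filter.eventually_map]
    filter_upwards [Filter.eventually_ge_atTop (0:ℝ)] with x hx
    exact hM _ (by simpa using hx)
  have hPL : ∀ z : ℂ, 0 ≤ z.re → ‖f z‖ ≤ C := fun z hz =>
    PhragmenLindelof.right_half_plane_of_bounded_on_real hd hexp hre him hz
  -- assemble
  have hne : ((fun z : ℂ => ‖(aeval z) p / (aeval z) q‖) '' {z : ℂ | 0 < z.re}).Nonempty :=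
    ⟨_, ⟨1, by norm_num, rfl⟩⟩
  have hub : ∀ x ∈ (fun z : ℂ => ‖(aeval z) p / (aeval z) q‖) '' {z : ℂ | 0 < z.re},
      x ≤ C := by
    rintro x ⟨z, hz, rfl⟩
    show ‖(aeval z) p / (aeval z) q‖ ≤ C
    rw [hfe]
    simpa using hPL z (le_of_lt hz)
  have hCeq : (⨆ ω : ℝ, ‖(aeval ((ω : ℂ) * Complex.I)) p /
      (aeval ((ω : ℂ) * Complex.I)) q‖) = C := by
    rw [hC]; congr 1; funext ω; rw [hfe]
  refine ⟨⟨C, hub⟩, ?_⟩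
  rw [hCeq]
  refine le_antisymm (csSup_le hne hub) ?_
  rw [hC]
  refine ciSup_le fun ω => ?_
  -- approximate i*ω from the right
  have hcont : ContinuousAt (fun z => ‖f z‖) ((ω : ℂ) * Complex.I) := by
    refine continuous_norm.continuousAt.comp ?_
    exact (P.continuous.continuousAt.div Q.continuous.continuousAt
      (hQz _ (by simp)))
  have hseq : Tendsto (fun k : ℕ => ((1 / (k + 1) : ℝ) : ℂ) + (ω : ℂ) * Complex.I)
      atTop (𝓝 ((ω : ℂ) * Complex.I)) := by
    have h0 : Tendsto (fun k : ℕ => ((1 / (k + 1) : ℝ) : ℂ)) atTop (𝓝 0) := by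
      rw [← Complex.ofReal_zero]
      exact (Complex.continuous_ofReal.tendsto 0).comp tendsto_one_div_add_atTop_nhds_zero_nat
    simpa using h0.add_const ((ω : ℂ) * Complex.I)
  have hlim2 : Tendsto (fun k : ℕ => ‖f (((1 / (k + 1) : ℝ) : ℂ) + (ω : ℂ) * Complex.I)‖)
      atTop (𝓝 (‖f ((ω : ℂ) * Complex.I)‖)) := hcont.tendsto.comp hseq
  refine le_of_tendsto hlim2 (Filter.Eventually.of_forall fun k => ?_)
  refine le_csSup ⟨C, hub⟩ ?_
  refine ⟨((1 / (k + 1) : ℝ) : ℂ) + (ω : ℂ) * Complex.I, ?_, ?_⟩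
  swap
  · show ‖(aeval _) p / (aeval _) q‖ = _
    rw [hfe]
  simp only [Set.mem_setOf_eq, Complex.add_re, Complex.ofReal_re, Complex.mul_I_re,
    Complex.ofReal_im, neg_zero, add_zero]
  positivity
end

section
/- Let G be a u×v matrix whose entries are rational functions p_{jk}/q_{jk} with p_{jk}, q_{jk} ∈ ℝ[s], deg p_{jk} ≤ deg q_{jk}, and q_{jk}(z) ≠ 0 for every z ∈ ℂ with Re z ≥ 0. Then sup_{Re z > 0} ‖G(z)‖ = sup_{ω ∈ ℝ} ‖G(iω)‖, where G(z) denotes the complex matrix obtained by entrywise evaluation at z. -/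
open Polynomial
open scoped Matrix.Norms.L2Operator Matrix
set_option maxHeartbeats 1000000

private lemma poly_eval_upper (P : Polynomial ℂ) (n : ℕ) (hn : P.natDegree ≤ n)
    (z : ℂ) (hz : 1 ≤ ‖z‖) :
    ‖P.eval z‖ ≤ (∑ i ∈ Finset.range (n + 1), ‖P.coeff i‖) * ‖z‖ ^ n := by
  rw [Polynomial.eval_eq_sum_range' (lt_of_le_of_lt hn (Nat.lt_succ_self n))]
  refine (norm_sum_le _ _).trans ?_
  rw [Finset.sum_mul]
  refine Finset.sum_le_sum fun i hi => ?_
  rw [norm_mul, norm_pow]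
  exact mul_le_mul_of_nonneg_left
    (pow_le_pow_right₀ hz (Nat.lt_succ_iff.mp (Finset.mem_range.mp hi))) (norm_nonneg _)

private lemma poly_eval_lower (Q : Polynomial ℂ) (hQ0 : Q ≠ 0) :
    ∃ R : ℝ, 1 ≤ R ∧ ∀ z : ℂ, R ≤ ‖z‖ →
      ‖Q.leadingCoeff‖ / 2 * ‖z‖ ^ Q.natDegree ≤ ‖Q.eval z‖ := by
  set n := Q.natDegree with hn
  have ha : 0 < ‖Q.leadingCoeff‖ := by
    simpa [norm_pos_iff] using Polynomial.leadingCoeff_ne_zero.mpr hQ0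
  set S := ∑ i ∈ Finset.range n, ‖Q.coeff i‖ with hS
  have hS0 : 0 ≤ S := Finset.sum_nonneg fun _ _ => norm_nonneg _
  refine ⟨max 1 (2 * S / ‖Q.leadingCoeff‖), le_max_left _ _, fun z hz => ?_⟩
  have hz1 : 1 ≤ ‖z‖ := le_trans (le_max_left _ _) hz
  have hz2 : 2 * S / ‖Q.leadingCoeff‖ ≤ ‖z‖ := le_trans (le_max_right _ _) hz
  have heval : Q.eval z = Q.leadingCoeff * z ^ n + ∑ i ∈ Finset.range n, Q.coeff i * z ^ i := by
    rw [Polynomial.eval_eq_sum_range' (Nat.lt_succ_self n), Finset.sum_range_succ,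
      Polynomial.coeff_natDegree, add_comm]
  have htail : ‖∑ i ∈ Finset.range n, Q.coeff i * z ^ i‖ ≤ ‖Q.leadingCoeff‖ / 2 * ‖z‖ ^ n := by
    rcases Nat.eq_zero_or_pos n with h0 | h0
    · simp only [h0, Finset.range_zero, Finset.sum_empty, norm_zero, pow_zero, mul_one]
      positivity
    have h1 : ‖∑ i ∈ Finset.range n, Q.coeff i * z ^ i‖ ≤ S * ‖z‖ ^ (n - 1) := by
      refine (norm_sum_le _ _).trans ?_
      rw [Finset.sum_mul]
      refine Finset.sum_le_sum fun i hi => ?_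
      rw [norm_mul, norm_pow]
      refine mul_le_mul_of_nonneg_left
        (pow_le_pow_right₀ hz1 ?_) (norm_nonneg _)
      have := Finset.mem_range.mp hi
      omega
    refine h1.trans ?_
    have hzn : ‖z‖ ^ n = ‖z‖ ^ (n - 1) * ‖z‖ := by
      rw [← pow_succ]
      congr 1
      omega
    rw [hzn]
    have hS' : 2 * S ≤ ‖z‖ * ‖Q.leadingCoeff‖ := by
      rw [div_le_iff₀ ha] at hz2
      linarith
    calc S * ‖z‖ ^ (n - 1) ≤ (‖Q.leadingCoeff‖ / 2 * ‖z‖) * ‖z‖ ^ (n - 1) := by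
          refine mul_le_mul_of_nonneg_right (by linarith) (by positivity)
      _ = ‖Q.leadingCoeff‖ / 2 * (‖z‖ ^ (n - 1) * ‖z‖) := by ring
  have key : ‖Q.leadingCoeff * z ^ n‖ - ‖∑ i ∈ Finset.range n, Q.coeff i * z ^ i‖
      ≤ ‖Q.eval z‖ := by
    have h := norm_sub_le (Q.leadingCoeff * z ^ n + ∑ i ∈ Finset.range n, Q.coeff i * z ^ i)
      (∑ i ∈ Finset.range n, Q.coeff i * z ^ i)
    simp only [add_sub_cancel_right] at h
    rw [heval]
    linarith
  rw [norm_mul, norm_pow] at key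
  linarith

private lemma entry_bound (P Q : Polynomial ℂ) (hdeg : P.degree ≤ Q.degree)
    (hQ : ∀ z : ℂ, 0 ≤ z.re → Q.eval z ≠ 0) :
    ∃ C : ℝ, 0 ≤ C ∧ ∀ z : ℂ, 0 ≤ z.re → ‖P.eval z / Q.eval z‖ ≤ C := by
  have hQ0 : Q ≠ 0 := by
    intro h
    exact hQ 0 (by simp) (by simp [h])
  obtain ⟨R, hR1, hR⟩ := poly_eval_lower Q hQ0
  have hn : P.natDegree ≤ Q.natDegree := Polynomial.natDegree_le_natDegree hdeg
  set SP := ∑ i ∈ Finset.range (Q.natDegree + 1), ‖P.coeff i‖ with hSP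
  have hSP0 : 0 ≤ SP := Finset.sum_nonneg fun _ _ => norm_nonneg _
  have ha : 0 < ‖Q.leadingCoeff‖ := by
    simpa [norm_pos_iff] using Polynomial.leadingCoeff_ne_zero.mpr hQ0
  have hK : IsCompact (Metric.closedBall (0 : ℂ) R ∩ {z : ℂ | 0 ≤ z.re}) :=
    (isCompact_closedBall _ _).inter_right (isClosed_le continuous_const Complex.continuous_re)
  have hcont : ContinuousOn (fun z : ℂ => P.eval z / Q.eval z)
      (Metric.closedBall (0 : ℂ) R ∩ {z : ℂ | 0 ≤ z.re}) := by
    refine ContinuousOn.div (Polynomial.continuous P).continuousOn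
      (Polynomial.continuous Q).continuousOn fun z hz => hQ z hz.2
  obtain ⟨M, hM⟩ := hK.exists_bound_of_continuousOn hcont
  refine ⟨max M (SP / (‖Q.leadingCoeff‖ / 2)), le_trans (div_nonneg hSP0 (by positivity)) (le_max_right _ _),
    fun z hz => ?_⟩
  rcases le_or_gt ‖z‖ R with h | h
  · refine le_trans (hM z ⟨?_, hz⟩) (le_max_left _ _)
    simpa [Metric.mem_closedBall, dist_zero_right] using h
  · have hz1 : 1 ≤ ‖z‖ := le_trans hR1 h.le
    have h1 := poly_eval_upper P Q.natDegree hn z hz1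
    have h2 := hR z h.le
    have hQz : 0 < ‖Q.eval z‖ := lt_of_lt_of_le (by positivity) h2
    refine le_trans ?_ (le_max_right _ _)
    rw [norm_div, div_le_iff₀ hQz]
    calc ‖P.eval z‖ ≤ SP * ‖z‖ ^ Q.natDegree := h1
      _ = SP / (‖Q.leadingCoeff‖ / 2) * (‖Q.leadingCoeff‖ / 2 * ‖z‖ ^ Q.natDegree) := by
          rw [← mul_assoc, div_mul_cancel₀ _ (ne_of_gt (half_pos ha))]
      _ ≤ SP / (‖Q.leadingCoeff‖ / 2) * ‖Q.eval z‖ :=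
          mul_le_mul_of_nonneg_left h2 (div_nonneg hSP0 (by positivity))

private lemma matrix_norm_le_sum {u v : ℕ} (A : Matrix (Fin u) (Fin v) ℂ) :
    ‖A‖ ≤ ∑ j : Fin u, ∑ k : Fin v, ‖A j k‖ := by
  rw [Matrix.l2_opNorm_def]
  refine ContinuousLinearMap.opNorm_le_bound _
    (Finset.sum_nonneg fun _ _ => Finset.sum_nonneg fun _ _ => norm_nonneg _) fun x => ?_
  have hx : ∀ k, ‖x k‖ ≤ ‖x‖ := by
    intro k
    rw [EuclideanSpace.norm_eq]
    have h1 : ‖x k‖ ^ 2 ≤ ∑ i, ‖x i‖ ^ 2 :=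
      Finset.single_le_sum (f := fun i => ‖x i‖ ^ 2) (fun i _ => by positivity) (Finset.mem_univ k)
    calc ‖x k‖ = Real.sqrt (‖x k‖ ^ 2) := (Real.sqrt_sq (norm_nonneg _)).symm
      _ ≤ _ := Real.sqrt_le_sqrt h1
  have happ : ‖((Matrix.toEuclideanLin.trans LinearMap.toContinuousLinearMap) A) x‖
      = ‖(WithLp.equiv 2 (Fin u → ℂ)).symm (A *ᵥ (WithLp.equiv 2 (Fin v → ℂ)) x)‖ := rfl
  rw [happ]
  set y : Fin u → ℂ := A *ᵥ (WithLp.equiv 2 (Fin v → ℂ)) x with hy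
  have h2 : ‖(WithLp.equiv 2 (Fin u → ℂ)).symm y‖ ≤ ∑ j, ‖y j‖ := by
    rw [EuclideanSpace.norm_eq]
    have h3 : ∑ i, ‖((WithLp.equiv 2 (Fin u → ℂ)).symm y) i‖ ^ 2 ≤ (∑ j, ‖y j‖) ^ 2 := by
      refine le_trans (le_of_eq ?_) (Finset.sum_sq_le_sq_sum_of_nonneg fun i _ => norm_nonneg _)
      rfl
    calc Real.sqrt (∑ i, ‖((WithLp.equiv 2 (Fin u → ℂ)).symm y) i‖ ^ 2)
        ≤ Real.sqrt ((∑ j, ‖y j‖) ^ 2) := Real.sqrt_le_sqrt h3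
      _ = ∑ j, ‖y j‖ := Real.sqrt_sq (Finset.sum_nonneg fun _ _ => norm_nonneg _)
  refine h2.trans ?_
  rw [Finset.sum_mul]
  refine Finset.sum_le_sum fun j _ => ?_
  have h4 : y j = ∑ k, A j k * x k := rfl
  rw [h4, Finset.sum_mul]
  refine (norm_sum_le _ _).trans (Finset.sum_le_sum fun k _ => ?_)
  rw [norm_mul]
  exact mul_le_mul_of_nonneg_left (hx k) (norm_nonneg _)

/-- For a `u × v` matrix `G` of proper and stable real rational functions
`p j k / q j k`, the supremum of the L2 operator norm `‖G(z)‖` over the open right half-plane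
equals the supremum of `‖G(iω)‖` over `ω ∈ ℝ`. -/
theorem stmt1 (u v : ℕ) (p q : Fin u → Fin v → Polynomial ℝ)
    (hdeg : ∀ j k, (p j k).degree ≤ (q j k).degree)
    (hstable : ∀ j k, ∀ z : ℂ, 0 ≤ z.re → (Polynomial.aeval z) (q j k) ≠ 0)
    (G : ℂ → Matrix (Fin u) (Fin v) ℂ)
    (hG : ∀ z j k, G z j k = (Polynomial.aeval z) (p j k) / (Polynomial.aeval z) (q j k)) :
    sSup ((fun z : ℂ => ‖G z‖) '' {z : ℂ | 0 < z.re}) =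
      ⨆ ω : ℝ, ‖G ((ω : ℂ) * Complex.I)‖ := by
  classical
  set Pm : Fin u → Fin v → Polynomial ℂ := fun j k => (p j k).map (algebraMap ℝ ℂ) with hPm
  set Qm : Fin u → Fin v → Polynomial ℂ := fun j k => (q j k).map (algebraMap ℝ ℂ) with hQm
  have heval : ∀ (r : Polynomial ℝ) (z : ℂ),
      (Polynomial.aeval z) r = (r.map (algebraMap ℝ ℂ)).eval z := fun r z => by
    rw [Polynomial.aeval_def, Polynomial.eval_map]
  have hGent : ∀ z j k, G z j k = (Pm j k).eval z / (Qm j k).eval z := fun z j k => by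
    rw [hG, heval, heval]
  have hQne : ∀ j k (z : ℂ), 0 ≤ z.re → (Qm j k).eval z ≠ 0 := fun j k z hz => by
    rw [← heval]; exact hstable j k z hz
  have hdeg' : ∀ j k, (Pm j k).degree ≤ (Qm j k).degree := fun j k => by
    rw [hPm, hQm]
    simp only [Polynomial.degree_map_eq_of_injective (algebraMap ℝ ℂ).injective]
    exact hdeg j k
  -- differentiability at every point of the closed right half-plane
  have hGeq : G = fun w => ∑ j : Fin u, ∑ k : Fin v,
      ((Pm j k).eval w / (Qm j k).eval w) • Matrix.single j k (1 : ℂ) := by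
    funext w
    refine (Matrix.matrix_eq_sum_single (G w)).trans ?_
    refine Finset.sum_congr rfl fun j _ => Finset.sum_congr rfl fun k _ => ?_
    rw [hGent, Matrix.smul_single, smul_eq_mul, mul_one]
  have hdiff : ∀ z : ℂ, 0 ≤ z.re → DifferentiableAt ℂ G z := by
    intro z hz
    rw [hGeq]
    refine DifferentiableAt.fun_sum fun j _ => DifferentiableAt.fun_sum fun k _ => ?_
    refine DifferentiableAt.smul_const ?_ _
    exact DifferentiableAt.div (Polynomial.differentiableAt _) (Polynomial.differentiableAt _) (hQne j k z hz)
  -- uniform bound on the closed right half-plane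
  choose Cb hCb0 hCb using fun j k => entry_bound (Pm j k) (Qm j k) (hdeg' j k) (hQne j k)
  set B := ∑ j : Fin u, ∑ k : Fin v, Cb j k with hB
  have hBound : ∀ z : ℂ, 0 ≤ z.re → ‖G z‖ ≤ B := by
    intro z hz
    refine (matrix_norm_le_sum (G z)).trans ?_
    refine Finset.sum_le_sum fun j _ => Finset.sum_le_sum fun k _ => ?_
    rw [hGent]
    exact hCb j k z hz
  have him_re : ∀ ω : ℝ, ((ω : ℂ) * Complex.I).re = 0 := fun ω => by simp
  have hbdd : BddAbove (Set.range fun ω : ℝ => ‖G ((ω : ℂ) * Complex.I)‖) := by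
    refine ⟨B, ?_⟩
    rintro x ⟨ω, rfl⟩
    exact hBound _ (le_of_eq (him_re ω).symm)
  set C := ⨆ ω : ℝ, ‖G ((ω : ℂ) * Complex.I)‖ with hC
  have him : ∀ ω : ℝ, ‖G ((ω : ℂ) * Complex.I)‖ ≤ C := fun ω => le_ciSup hbdd ω
  have hC0 : 0 ≤ C := le_trans (norm_nonneg _) (him 0)
  have hd : DiffContOnCl ℂ G {z : ℂ | 0 < z.re} := by
    refine ⟨fun z hz => (hdiff z (le_of_lt hz)).differentiableWithinAt, ?_⟩
    rw [Complex.closure_setOf_lt_re]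
    exact fun z hz => (hdiff z hz).continuousAt.continuousWithinAt
  have key : ∀ z : ℂ, 0 ≤ z.re → ‖G z‖ ≤ C := by
    intro z hz
    refine PhragmenLindelof.right_half_plane_of_bounded_on_real hd
      ⟨1, one_lt_two, 0, ?_⟩ ?_ him hz
    · refine Asymptotics.IsBigO.of_bound B ?_
      rw [Filter.eventually_inf_principal]
      refine Filter.Eventually.of_forall fun w hw => ?_
      simpa using hBound w (le_of_lt hw)
    · refine ⟨B, ?_⟩
      rw [Filter.eventually_map]
      filter_upwards [Filter.eventually_ge_atTop (0 : ℝ)] with x hx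
      exact hBound _ (by simpa using hx)
  have hset : BddAbove ((fun z : ℂ => ‖G z‖) '' {z : ℂ | 0 < z.re}) := by
    refine ⟨C, ?_⟩
    rintro x ⟨z, hz, rfl⟩
    exact key z (le_of_lt hz)
  refine le_antisymm ?_ ?_
  · refine Real.sSup_le ?_ hC0
    rintro x ⟨z, hz, rfl⟩
    exact key z (le_of_lt hz)
  · refine ciSup_le fun ω => ?_
    have hcont : ContinuousAt G ((ω : ℂ) * Complex.I) :=
      (hdiff _ (le_of_eq (him_re ω).symm)).continuousAt
    have h1 : Filter.Tendsto (fun t : ℝ => ((t : ℂ) + (ω : ℂ) * Complex.I))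
        (nhdsWithin 0 (Set.Ioi 0)) (nhds ((ω : ℂ) * Complex.I)) := by
      have hc : Continuous fun t : ℝ => ((t : ℂ) + (ω : ℂ) * Complex.I) := Complex.continuous_ofReal.add continuous_const
      have := hc.tendsto (0 : ℝ)
      simpa using this.mono_left nhdsWithin_le_nhds
    have htend : Filter.Tendsto (fun t : ℝ => ‖G ((t : ℂ) + (ω : ℂ) * Complex.I)‖)
        (nhdsWithin 0 (Set.Ioi 0)) (nhds ‖G ((ω : ℂ) * Complex.I)‖) :=
      ((hcont.tendsto.comp h1)).norm
    refine le_of_tendsto htend ?_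
    filter_upwards [self_mem_nhdsWithin] with t ht
    refine le_csSup hset ⟨(t : ℂ) + (ω : ℂ) * Complex.I, ?_, rfl⟩
    simpa using ht
end

section
/- Let M be a complex u×v matrix and γ > 0 a real number. Then γ > ‖M‖ if and only if the v×v matrix γ² • 1_v − Mᴴ · M is positive definite. -/
open Matrix
open scoped ComplexOrder
open scoped Matrix.Norms.L2Operator

set_option maxHeartbeats 1000000 in
/-- For a complex `u × v` matrix `M` and a real `γ > 0`, we have `γ > ‖M‖`
(L2 operator norm) if and only if `γ² • 1 − Mᴴ * M` is positive definite. -/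
theorem stmt2 (u v : ℕ) (M : Matrix (Fin u) (Fin v) ℂ) (γ : ℝ) (hγ : 0 < γ) :
    γ > ‖M‖ ↔ (γ ^ 2 • (1 : Matrix (Fin v) (Fin v) ℂ) - Mᴴ * M).PosDef := by
  set T := (toEuclideanLin (𝕜 := ℂ) (m := Fin u) (n := Fin v)).trans
    LinearMap.toContinuousLinearMap M with hT
  have hnorm : ‖M‖ = ‖T‖ := rfl
  have hTx : ∀ x : EuclideanSpace ℂ (Fin v),
      T x = (WithLp.equiv 2 (Fin u → ℂ)).symm (M *ᵥ (WithLp.equiv 2 (Fin v → ℂ)) x) := fun _ => rfl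
  have key : ∀ x : EuclideanSpace ℂ (Fin v),
      star ((WithLp.equiv 2 (Fin v → ℂ)) x) ⬝ᵥ
        ((γ ^ 2 • (1 : Matrix (Fin v) (Fin v) ℂ) - Mᴴ * M) *ᵥ (WithLp.equiv 2 (Fin v → ℂ)) x)
        = ((γ ^ 2 * ‖x‖ ^ 2 - ‖T x‖ ^ 2 : ℝ) : ℂ) := by
    intro x
    set x' := (WithLp.equiv 2 (Fin v → ℂ)) x with hx'
    have h1 : star x' ⬝ᵥ x' = ((‖x‖ : ℂ)) ^ 2 := by
      have := (show inner ℂ ((WithLp.equiv 2 (Fin v → ℂ)).symm x') ((WithLp.equiv 2 (Fin v → ℂ)).symm x') = star x' ⬝ᵥ x' from by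
        simp only [EuclideanSpace.inner_eq_star_dotProduct]; exact dotProduct_comm _ _)
      simp only [hx'] at this ⊢
      rw [← this]
      have hx'' : (WithLp.equiv 2 (Fin v → ℂ)).symm x' = x := by simp [hx']
      rw [hx'', inner_self_eq_norm_sq_to_K]
      norm_cast
    have h2 : star (M *ᵥ x') ⬝ᵥ (M *ᵥ x') = ((‖T x‖ : ℂ)) ^ 2 := by
      have := (show inner ℂ ((WithLp.equiv 2 (Fin u → ℂ)).symm (M *ᵥ x')) ((WithLp.equiv 2 (Fin u → ℂ)).symm (M *ᵥ x')) = star (M *ᵥ x') ⬝ᵥ (M *ᵥ x') from by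
        simp only [EuclideanSpace.inner_eq_star_dotProduct]; exact dotProduct_comm _ _)
      rw [← this, ← hTx x, inner_self_eq_norm_sq_to_K]
      norm_cast
    rw [sub_mulVec, dotProduct_sub, smul_mulVec, one_mulVec, dotProduct_smul,
      ← mulVec_mulVec, Matrix.dotProduct_mulVec, ← Matrix.star_mulVec, h1, h2,
      Complex.real_smul]
    push_cast
    ring
  constructor
  · intro h
    rw [posDef_iff_dotProduct_mulVec]
    refine ⟨?_, ?_⟩
    · simp only [Matrix.IsHermitian, conjTranspose_sub, conjTranspose_smul, conjTranspose_one,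
        conjTranspose_mul, conjTranspose_conjTranspose, star_trivial]
    · intro x hx
      set xE : EuclideanSpace ℂ (Fin v) := (WithLp.equiv 2 (Fin v → ℂ)).symm x with hxE
      have hxx : (WithLp.equiv 2 (Fin v → ℂ)) xE = x := by simp [hxE]
      have := key xE
      rw [hxx] at this
      rw [this, Complex.zero_lt_real]
      have hxpos : 0 < ‖xE‖ := by
        rw [norm_pos_iff]
        simpa [hxE] using hx
      have hle : ‖T xE‖ ≤ ‖M‖ * ‖xE‖ := by rw [hnorm]; exact T.le_opNorm xE
      have h3 : ‖T xE‖ < γ * ‖xE‖ := hle.trans_lt (mul_lt_mul_of_pos_right h hxpos)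
      nlinarith [norm_nonneg (T xE), mul_self_lt_mul_self (norm_nonneg (T xE)) h3]
  · intro h
    rcases Nat.eq_zero_or_pos v with hv | hv
    · subst hv
      have : M = 0 := by ext i j; exact j.elim0
      rw [this, norm_zero]
      exact hγ
    · haveI : Nonempty (Fin v) := Fin.pos_iff_nonempty.mp hv
      have hsph : (Metric.sphere (0 : EuclideanSpace ℂ (Fin v)) 1).Nonempty :=
        NormedSpace.sphere_nonempty.mpr zero_le_one
      obtain ⟨x0, hx0mem, hmax⟩ := (isCompact_sphere (0 : EuclideanSpace ℂ (Fin v)) 1)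
        |>.exists_isMaxOn hsph (T.continuous.norm.continuousOn)
      have hx0norm : ‖x0‖ = 1 := by simpa using hx0mem
      have hx0ne : (WithLp.equiv 2 (Fin v → ℂ)) x0 ≠ 0 := by
        intro hc
        have : x0 = 0 := by
          have := congrArg (WithLp.equiv 2 (Fin v → ℂ)).symm hc
          simpa using this
        simp [this] at hx0norm
      have hpos := (posDef_iff_dotProduct_mulVec.mp h).2 hx0ne
      rw [key x0, Complex.zero_lt_real, hx0norm] at hpos
      have hTx0 : ‖T x0‖ < γ := by nlinarith [norm_nonneg (T x0), mul_self_nonneg (‖T x0‖ - γ)]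
      have hle : ‖T‖ ≤ ‖T x0‖ := by
        refine T.opNorm_le_bound (norm_nonneg _) fun x => ?_
        rcases eq_or_ne x 0 with rfl | hx
        · simp
        · have hxpos : 0 < ‖x‖ := norm_pos_iff.mpr hx
          set y : EuclideanSpace ℂ (Fin v) := ((‖x‖ : ℂ))⁻¹ • x with hy
          have hyn : ‖y‖ = 1 := by
            rw [hy, norm_smul]
            simp [norm_inv, hxpos.ne']
          have hymem : y ∈ Metric.sphere (0 : EuclideanSpace ℂ (Fin v)) 1 := by
            simp [hyn]
          have hmy : ‖T y‖ ≤ ‖T x0‖ := hmax hymem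
          have hxy : x = (‖x‖ : ℂ) • y := by
            rw [hy, smul_smul, mul_inv_cancel₀ (by exact_mod_cast hxpos.ne'), one_smul]
          calc ‖T x‖ = ‖(‖x‖ : ℂ) • T y‖ := by rw [← T.map_smul, ← hxy]
            _ = ‖x‖ * ‖T y‖ := by rw [norm_smul]; simp
            _ ≤ ‖x‖ * ‖T x0‖ := by exact mul_le_mul_of_nonneg_left hmy hxpos.le
            _ = ‖T x0‖ * ‖x‖ := mul_comm _ _
      rw [gt_iff_lt, hnorm]
      exact lt_of_le_of_lt hle hTx0
end

section
/- Let G be a u×v matrix whose entries are proper rational functions in RatFunc ℝ with no poles on the imaginary axis, let Gc : ℝ → (u×v complex matrices) be defined by entrywise evaluation at iω, and assume the set {‖Gc(ω)‖ : ω ∈ ℝ} is bounded above. Let D be a complex u×v matrix such that Gc(ω) → D as ω → +∞ and as ω → −∞. Then for every real γ > 0: γ > sup_{ω ∈ ℝ} ‖Gc(ω)‖ if and only if γ > ‖D‖ and det(γ² • 1_v − Gc(ω)ᴴ · Gc(ω)) ≠ 0 for all ω ∈ ℝ. -/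
open Matrix Polynomial
open scoped Matrix.Norms.L2Operator

private lemma dot_inner {n : ℕ} (a b : Fin n → ℂ) :
    star a ⬝ᵥ b =
      (inner ℂ ((EuclideanSpace.equiv (Fin n) ℂ).symm a)
        ((EuclideanSpace.equiv (Fin n) ℂ).symm b) : ℂ) := by
  simp [dotProduct, PiLp.inner_apply, RCLike.inner_apply, mul_comm]

private lemma dot_self {n : ℕ} (a : Fin n → ℂ) :
    star a ⬝ᵥ a = ((‖(EuclideanSpace.equiv (Fin n) ℂ).symm a‖ : ℝ) : ℂ) ^ 2 := by
  rw [dot_inner, inner_self_eq_norm_sq_to_K]; rfl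

private lemma keyF {u v : ℕ} (A : Matrix (Fin u) (Fin v) ℂ) (x : Fin v → ℂ) (z : ℂ)
    (hx : x ≠ 0) (hAx : (Aᴴ * A) *ᵥ x = z • x) :
    z = (((‖(EuclideanSpace.equiv (Fin u) ℂ).symm (A *ᵥ x)‖ /
        ‖(EuclideanSpace.equiv (Fin v) ℂ).symm x‖ : ℝ)) : ℂ) ^ 2 := by
  set X := (EuclideanSpace.equiv (Fin v) ℂ).symm x with hX
  set Y := (EuclideanSpace.equiv (Fin u) ℂ).symm (A *ᵥ x) with hY
  have hXne : (‖X‖ : ℝ) ≠ 0 := by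
    simp only [norm_ne_zero_iff, hX]
    exact fun h => hx (((EuclideanSpace.equiv (Fin v) ℂ).symm.map_eq_zero_iff).mp h)
  have e1 : star x ⬝ᵥ ((Aᴴ * A) *ᵥ x) = ((‖Y‖ : ℝ) : ℂ) ^ 2 := by
    rw [← Matrix.mulVec_mulVec, Matrix.dotProduct_mulVec, ← Matrix.star_mulVec, dot_self]
  have e2 : star x ⬝ᵥ (z • x) = z * ((‖X‖ : ℝ) : ℂ) ^ 2 := by
    rw [dotProduct_smul, smul_eq_mul, dot_self]
  rw [hAx, e2] at e1
  have hXc : ((‖X‖ : ℝ) : ℂ) ≠ 0 := by exact_mod_cast hXne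
  have : z = ((‖Y‖ : ℝ) : ℂ) ^ 2 / ((‖X‖ : ℝ) : ℂ) ^ 2 := by
    rw [eq_div_iff (pow_ne_zero 2 hXc)]; exact e1
  rw [this]
  push_cast
  rw [div_pow]

private lemma lemA {u v : ℕ} (A : Matrix (Fin u) (Fin v) ℂ) (γ : ℝ) (hγ : 0 < γ)
    (hdet : (γ ^ 2 • (1 : Matrix (Fin v) (Fin v) ℂ) - Aᴴ * A).det = 0) : γ ≤ ‖A‖ := by
  obtain ⟨x, hx, hx0⟩ := Matrix.exists_mulVec_eq_zero_iff.mpr hdet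
  have hAx : (Aᴴ * A) *ᵥ x = ((γ ^ 2 : ℝ) : ℂ) • x := by
    rw [Matrix.sub_mulVec, sub_eq_zero] at hx0
    rw [← hx0, Matrix.smul_mulVec, Matrix.one_mulVec]
    ext i
    simp [Complex.real_smul]
  have hz := keyF A x _ hx hAx
  set X := (EuclideanSpace.equiv (Fin v) ℂ).symm x with hX
  set Y := (EuclideanSpace.equiv (Fin u) ℂ).symm (A *ᵥ x) with hY
  have hXpos : 0 < ‖X‖ := by
    rw [norm_pos_iff]
    exact fun h => hx (((EuclideanSpace.equiv (Fin v) ℂ).symm.map_eq_zero_iff).mp h)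
  have hr : γ ^ 2 = (‖Y‖ / ‖X‖) ^ 2 := by exact_mod_cast hz
  have hratio : γ = ‖Y‖ / ‖X‖ := by
    have h0 : 0 ≤ ‖Y‖ / ‖X‖ := div_nonneg (norm_nonneg _) (norm_nonneg _)
    nlinarith
  have hYle : ‖Y‖ ≤ ‖A‖ * ‖X‖ := A.l2_opNorm_mulVec X
  have : γ * ‖X‖ = ‖Y‖ := by rw [hratio]; field_simp
  calc γ = ‖Y‖ / ‖X‖ := hratio
    _ ≤ (‖A‖ * ‖X‖) / ‖X‖ := by gcongr
    _ = ‖A‖ := by field_simp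

private lemma lemB {u v : ℕ} (A : Matrix (Fin u) (Fin v) ℂ) (γ : ℝ) (hγ : 0 < γ)
    (hnorm : ‖A‖ = γ) : (γ ^ 2 • (1 : Matrix (Fin v) (Fin v) ℂ) - Aᴴ * A).det = 0 := by
  rcases Nat.eq_zero_or_pos v with hv | hv
  · exfalso
    subst hv
    haveI : Subsingleton (Matrix (Fin u) (Fin 0) ℂ) := by
      constructor; intro a b; ext i j; exact absurd j.2 (by omega)
    rw [Subsingleton.elim A 0, norm_zero] at hnorm
    exact absurd hnorm.symm (ne_of_gt hγ)
  haveI : Nonempty (Fin v) := Fin.pos_iff_nonempty.mp hv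
  haveI : Nontrivial (EuclideanSpace ℂ (Fin v)) := by
    refine ⟨⟨(WithLp.equiv 2 (Fin v → ℂ)).symm (fun _ => 1), 0, fun h => (one_ne_zero : (1 : ℂ) ≠ 0) ?_⟩⟩
    have := congrArg (fun y => WithLp.equiv 2 (Fin v → ℂ) y) h
    simpa using congrFun this (Classical.arbitrary (Fin v))
  set T := (Matrix.toEuclideanLin.trans LinearMap.toContinuousLinearMap) A with hT
  have hTA : ‖T‖ = γ := by rw [← Matrix.l2_opNorm_def]; exact hnorm
  have hsph : (Metric.sphere (0 : EuclideanSpace ℂ (Fin v)) 1).Nonempty :=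
 by
    obtain ⟨y⟩ := NormedSpace.sphere_nonempty_rclike ℂ (E := EuclideanSpace ℂ (Fin v))
      (r := 1) zero_le_one
    exact ⟨y, y.2⟩
  obtain ⟨x₀, hx₀mem, hmax⟩ := (isCompact_sphere (0 : EuclideanSpace ℂ (Fin v)) 1).exists_isMaxOn
    hsph (T.continuous.norm.continuousOn)
  have hx₀ : ‖x₀‖ = 1 := by simpa using hx₀mem
  have hTle : ∀ y : EuclideanSpace ℂ (Fin v), ‖T y‖ ≤ ‖T x₀‖ * ‖y‖ := by
    intro y
    rcases eq_or_ne y 0 with rfl | hy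
    · simp
    · have hyn : ‖y‖ ≠ 0 := norm_ne_zero_iff.mpr hy
      have hmem : ((‖y‖⁻¹ : ℝ) : ℂ) • y ∈ Metric.sphere (0 : EuclideanSpace ℂ (Fin v)) 1 := by
        rw [mem_sphere_zero_iff_norm, norm_smul]
        simp [abs_of_nonneg (inv_nonneg.mpr (norm_nonneg y)), inv_mul_cancel₀ hyn]
      have h1 := hmax hmem
      simp only [Set.mem_setOf_eq, _root_.map_smul, norm_smul, Complex.norm_real,
        Real.norm_eq_abs, abs_inv, abs_norm] at h1
      calc ‖T y‖ = (‖y‖⁻¹ * ‖T y‖) * ‖y‖ := by field_simp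
        _ ≤ ‖T x₀‖ * ‖y‖ := by
            apply mul_le_mul_of_nonneg_right _ (norm_nonneg y)
            exact h1
  have hTnorm : ‖T x₀‖ = γ := by
    refine le_antisymm ?_ ?_
    · have := T.unit_le_opNorm x₀ hx₀.le
      rwa [hTA] at this
    · rw [← hTA]
      exact T.opNorm_le_bound (norm_nonneg _) hTle
  -- pass to plain vectors
  set x : Fin v → ℂ := WithLp.equiv 2 (Fin v → ℂ) x₀ with hx
  have hxX : (EuclideanSpace.equiv (Fin v) ℂ).symm x = x₀ := by
    simp [hx, EuclideanSpace.equiv]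
  have hxne : x ≠ 0 := by
    intro h
    have : x₀ = 0 := by
      rw [← hxX, h]; simp [EuclideanSpace.equiv]
    rw [this, norm_zero] at hx₀
    exact one_ne_zero hx₀.symm
  have hTx : T x₀ = (EuclideanSpace.equiv (Fin u) ℂ).symm (A *ᵥ x) := by
    show Matrix.toEuclideanLin A x₀ = _
    rw [Matrix.toEuclideanLin_apply]
    rfl
  have hYnorm : ‖(EuclideanSpace.equiv (Fin u) ℂ).symm (A *ᵥ x)‖ = γ := by
    rw [← hTx]; exact hTnorm
  -- inner product identity
  set Z : EuclideanSpace ℂ (Fin v) :=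
    (EuclideanSpace.equiv (Fin v) ℂ).symm ((Aᴴ * A) *ᵥ x) with hZ
  have hinner : (inner ℂ x₀ Z : ℂ) = ((γ ^ 2 : ℝ) : ℂ) := by
    have e1 : star x ⬝ᵥ ((Aᴴ * A) *ᵥ x) =
        ((‖(EuclideanSpace.equiv (Fin u) ℂ).symm (A *ᵥ x)‖ : ℝ) : ℂ) ^ 2 := by
      rw [← Matrix.mulVec_mulVec, Matrix.dotProduct_mulVec, ← Matrix.star_mulVec, dot_self]
    rw [dot_inner, hxX] at e1
    rw [← hZ] at e1
    rw [e1, hYnorm]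
    push_cast
    ring
  -- norm of Z
  have hZle : ‖Z‖ ≤ γ ^ 2 := by
    have h1 : ‖Z‖ ≤ ‖Aᴴ * A‖ * ‖x₀‖ := by
      have := (Aᴴ * A).l2_opNorm_mulVec ((EuclideanSpace.equiv (Fin v) ℂ).symm x)
      rwa [hxX] at this
    rw [Matrix.l2_opNorm_conjTranspose_mul_self, hnorm, hx₀, mul_one] at h1
    calc ‖Z‖ ≤ γ * γ := h1
      _ = γ ^ 2 := (sq γ).symm
  have hZge : γ ^ 2 ≤ ‖Z‖ := by
    have h1 : ‖(inner ℂ x₀ Z : ℂ)‖ ≤ ‖x₀‖ * ‖Z‖ := norm_inner_le_norm x₀ Z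
    rw [hinner, hx₀, one_mul] at h1
    calc γ ^ 2 = ‖((γ ^ 2 : ℝ) : ℂ)‖ := by
          rw [Complex.norm_real, Real.norm_eq_abs]
          exact (abs_of_nonneg (by positivity)).symm
      _ ≤ ‖Z‖ := h1
  have hZnorm : ‖Z‖ = γ ^ 2 := le_antisymm hZle hZge
  -- Cauchy–Schwarz equality
  have heq : (inner ℂ x₀ Z : ℂ) = ((‖x₀‖ : ℝ) : ℂ) * ((‖Z‖ : ℝ) : ℂ) := by
    rw [hinner, hx₀, hZnorm]
    push_cast
    ring
  have hcs := inner_eq_norm_mul_iff.mp heq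
  rw [hx₀, hZnorm] at hcs
  -- hcs : ((γ^2 : ℝ) : ℂ) • x₀ = ((1:ℝ) : ℂ) • Z
  have hZx : Z = ((γ ^ 2 : ℝ) : ℂ) • x₀ := by
    simpa using hcs.symm
  -- convert back to mulVec equation
  have hmv : (Aᴴ * A) *ᵥ x = ((γ ^ 2 : ℝ) : ℂ) • x := by
    have := congrArg (fun y => WithLp.equiv 2 (Fin v → ℂ) y) hZx
    simpa [hZ, EuclideanSpace.equiv, hx] using this
  have hker : (γ ^ 2 • (1 : Matrix (Fin v) (Fin v) ℂ) - Aᴴ * A) *ᵥ x = 0 := by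
    rw [Matrix.sub_mulVec, Matrix.smul_mulVec, Matrix.one_mulVec, hmv, sub_eq_zero]
    ext i
    simp [Complex.real_smul]
  exact Matrix.exists_mulVec_eq_zero_iff.mp ⟨x, hxne, hker⟩

/-- Let `G` be a `u × v` matrix of proper real rational functions with no poles
on the imaginary axis, `Gc ω` its entrywise evaluation at `iω`, with `{‖Gc ω‖}` bounded above,
and let `D` be the common limit of `Gc ω` as `ω → ±∞`.  Then for every real `γ > 0`:
`γ > sup_ω ‖Gc ω‖` iff `γ > ‖D‖` and `det (γ² • 1 − (Gc ω)ᴴ * Gc ω) ≠ 0` for all `ω ∈ ℝ`. -/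
theorem stmt4 (u v : ℕ) (G : Matrix (Fin u) (Fin v) (RatFunc ℝ))
    (hproper : ∀ j k, (G j k).num.degree ≤ (G j k).denom.degree)
    (hpoles : ∀ j k, ∀ ω : ℝ, (Polynomial.aeval ((ω : ℂ) * Complex.I)) (G j k).denom ≠ 0)
    (Gc : ℝ → Matrix (Fin u) (Fin v) ℂ)
    (hGc : ∀ ω j k, Gc ω j k =
        (Polynomial.aeval ((ω : ℂ) * Complex.I)) (G j k).num /
        (Polynomial.aeval ((ω : ℂ) * Complex.I)) (G j k).denom)
    (hbdd : BddAbove (Set.range fun ω : ℝ => ‖Gc ω‖))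
    (D : Matrix (Fin u) (Fin v) ℂ)
    (hDtop : Filter.Tendsto Gc Filter.atTop (nhds D))
    (hDbot : Filter.Tendsto Gc Filter.atBot (nhds D))
    (γ : ℝ) (hγ : 0 < γ) :
    γ > (⨆ ω : ℝ, ‖Gc ω‖) ↔
      γ > ‖D‖ ∧
        ∀ ω : ℝ, (γ ^ 2 • (1 : Matrix (Fin v) (Fin v) ℂ) - (Gc ω)ᴴ * Gc ω).det ≠ 0 := by
  have hle : ∀ ω : ℝ, ‖Gc ω‖ ≤ ⨆ ω : ℝ, ‖Gc ω‖ := fun ω => le_ciSup hbdd ω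
  have hDle : ‖D‖ ≤ ⨆ ω : ℝ, ‖Gc ω‖ :=
    le_of_tendsto (hDtop.norm) (Filter.Eventually.of_forall hle)
  -- continuity of `Gc`
  have hcont : Continuous Gc := by
    apply continuous_matrix
    intro j k
    have : (fun ω : ℝ => Gc ω j k) = fun ω : ℝ =>
        (Polynomial.aeval ((ω : ℂ) * Complex.I)) (G j k).num /
        (Polynomial.aeval ((ω : ℂ) * Complex.I)) (G j k).denom := by
      funext ω; exact hGc ω j k
    rw [this]
    have hiw : Continuous fun ω : ℝ => ((ω : ℂ) * Complex.I) :=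
      Complex.continuous_ofReal.mul continuous_const
    exact ((G j k).num.continuous_aeval.comp hiw).div
      ((G j k).denom.continuous_aeval.comp hiw) (fun ω => hpoles j k ω)
  have hfc : Continuous fun ω : ℝ => ‖Gc ω‖ := hcont.norm
  constructor
  · intro h
    refine ⟨lt_of_le_of_lt hDle h, fun ω hdet => ?_⟩
    have h1 := lemA (Gc ω) γ hγ hdet
    have h2 := hle ω
    have := lt_of_le_of_lt (h1.trans h2) h
    exact lt_irrefl γ this
  · rintro ⟨hD, hdet⟩
    have hne : ∀ ω : ℝ, ‖Gc ω‖ ≠ γ := fun ω h => hdet ω (lemB (Gc ω) γ hγ h)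
    set c : ℝ := (‖D‖ + γ) / 2 with hc
    have hc1 : ‖D‖ < c := by rw [hc]; linarith
    have hc2 : c < γ := by rw [hc]; linarith
    obtain ⟨N, hN⟩ := Filter.eventually_atTop.mp ((hDtop.norm).eventually_lt_const hc1)
    obtain ⟨M, hM⟩ := Filter.eventually_atBot.mp ((hDbot.norm).eventually_lt_const hc1)
    have hallt : ∀ ω : ℝ, ‖Gc ω‖ < γ := by
      by_contra hcon
      push_neg at hcon
      obtain ⟨ω₁, hω₁⟩ := hcon
      have hgt : γ < ‖Gc ω₁‖ := lt_of_le_of_ne hω₁ (fun h => hne ω₁ h.symm)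
      have hU : IsOpen {ω : ℝ | ‖Gc ω‖ < γ} := isOpen_lt hfc continuous_const
      have hV : IsOpen {ω : ℝ | γ < ‖Gc ω‖} := isOpen_lt continuous_const hfc
      have hcover : (Set.univ : Set ℝ) ⊆ {ω | ‖Gc ω‖ < γ} ∪ {ω | γ < ‖Gc ω‖} :=
        fun ω _ => (lt_or_gt_of_ne (hne ω)).imp id id
      have hUne : (Set.univ ∩ {ω : ℝ | ‖Gc ω‖ < γ}).Nonempty :=
        ⟨N, trivial, lt_trans (hN N le_rfl) hc2⟩
      have hVne : (Set.univ ∩ {ω : ℝ | γ < ‖Gc ω‖}).Nonempty := ⟨ω₁, trivial, hgt⟩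
      obtain ⟨ω₂, -, h1, h2⟩ := isPreconnected_univ _ _ hU hV hcover hUne hVne
      simp only [Set.mem_setOf_eq] at h1 h2
      linarith
    set a : ℝ := min M 0 with ha
    set b : ℝ := max N 0 with hb
    have hab : a ≤ b := le_trans (min_le_right _ _) (le_max_right _ _)
    obtain ⟨ω₀, -, hmax⟩ := (isCompact_Icc (a := a) (b := b)).exists_isMaxOn
      ⟨a, Set.left_mem_Icc.mpr hab⟩ hfc.continuousOn
    have hbound : ∀ ω : ℝ, ‖Gc ω‖ ≤ max (‖Gc ω₀‖) c := by
      intro ω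
      rcases le_or_gt ω b with h1 | h1
      · rcases le_or_gt a ω with h2 | h2
        · exact le_max_of_le_left (hmax ⟨h2, h1⟩)
        · exact le_max_of_le_right
            (hM ω (le_trans h2.le (min_le_left _ _))).le
      · exact le_max_of_le_right (hN ω (le_trans (le_max_left _ _) h1.le)).le
    have hsup : (⨆ ω : ℝ, ‖Gc ω‖) ≤ max (‖Gc ω₀‖) c := ciSup_le hbound
    have hmaxlt : max (‖Gc ω₀‖) c < γ := max_lt (hallt ω₀) hc2
    exact lt_of_le_of_lt hsup hmaxlt
end

section
/- Let n be a nonzero bivariate real polynomial in (x, y), viewed as an element of (ℝ[y])[x] with positive degree in x. Suppose the set S := {y ∈ ℝ | ∃ x ∈ ℝ, n(x, y) = 0} is nonempty and bounded above, and let y* := sup S. Then either there exists x* ∈ ℝ with n(x*, y*) = 0 and (∂n/∂x)(x*, y*) = 0, or Lc_x(n)(y*) = 0. -/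
open Polynomial

private lemma stmt9_key (n : Polynomial (Polynomial ℝ)) (x y : ℝ) :
    (n.eval (C x)).eval y = (n.map (evalRingHom y)).eval x := by
  rw [eval_map]
  induction n using Polynomial.induction_on with
  | C a => simp
  | add p q hp hq => simp [hp, hq]
  | monomial k a h => simp [h, pow_succ, mul_assoc]

private lemma stmt9_Feq (n : Polynomial (Polynomial ℝ)) (x y : ℝ) :
    (n.eval (C x)).eval y
      = ∑ i ∈ Finset.range (n.natDegree + 1), (n.coeff i).eval y * x ^ i := by
  have h1 : n.eval (C x)
      = ∑ i ∈ Finset.range (n.natDegree + 1), n.coeff i * (C x) ^ i :=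
    eval_eq_sum_range (C x)
  rw [h1, eval_finset_sum]
  simp

private lemma stmt9_root_bound (q : Polynomial ℝ) (d : ℕ) (c M : ℝ) (hd0 : 0 < d)
    (hd : q.natDegree ≤ d) (hc0 : 0 < c) (hc : c ≤ |q.coeff d|)
    (hM : ∀ i < d, |q.coeff i| ≤ M) {x : ℝ} (hx : q.eval x = 0) :
    |x| ≤ max 1 (d * M / c) := by
  rcases le_or_gt |x| 1 with h1 | h1
  · exact le_max_of_le_left h1
  have hsum : ∑ i ∈ Finset.range (d + 1), q.coeff i * x ^ i = 0 := by
    rw [← eval_eq_sum_range' (lt_of_le_of_lt hd (lt_add_one d)), hx]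
  rw [Finset.sum_range_succ] at hsum
  have hmain : q.coeff d * x ^ d = -∑ i ∈ Finset.range d, q.coeff i * x ^ i := by linarith
  have habs : |q.coeff d| * |x| ^ d ≤ d * M * |x| ^ (d - 1) := by
    calc |q.coeff d| * |x| ^ d = |q.coeff d * x ^ d| := by
          rw [abs_mul, abs_pow]
      _ = |∑ i ∈ Finset.range d, q.coeff i * x ^ i| := by rw [hmain, abs_neg]
      _ ≤ ∑ i ∈ Finset.range d, |q.coeff i * x ^ i| := Finset.abs_sum_le_sum_abs _ _
      _ ≤ ∑ i ∈ Finset.range d, M * |x| ^ (d - 1) := by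
          apply Finset.sum_le_sum
          intro i hi
          rw [Finset.mem_range] at hi
          rw [abs_mul, abs_pow]
          have h2 : |x| ^ i ≤ |x| ^ (d - 1) :=
            pow_le_pow_right₀ h1.le (by omega)
          have h3 : |q.coeff i| ≤ M := hM i hi
          have h4 : (0:ℝ) ≤ |x| ^ i := by positivity
          nlinarith [abs_nonneg (q.coeff i)]
      _ = d * M * |x| ^ (d - 1) := by
          rw [Finset.sum_const, Finset.card_range]; ring
  have hxd : |x| ^ d = |x| * |x| ^ (d - 1) := by
    rw [← pow_succ']; congr 1; omega
  have hpos : (0:ℝ) < |x| ^ (d - 1) := by positivity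
  have h5 : c * |x| ≤ d * M := by
    have : c * |x| * |x| ^ (d-1) ≤ d * M * |x| ^ (d-1) := by
      calc c * |x| * |x| ^ (d-1) = c * |x| ^ d := by rw [hxd]; ring
        _ ≤ |q.coeff d| * |x| ^ d := by nlinarith [pow_pos (lt_trans one_pos h1) d]
        _ ≤ d * M * |x| ^ (d - 1) := habs
    exact le_of_mul_le_mul_right this hpos
  refine le_max_of_le_right ?_
  rw [le_div_iff₀ hc0]; linarith

private lemma stmt9_ivt_root {f : ℝ → ℝ} (hf : Continuous f) {u v : ℝ} (huv : u ≤ v)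
    (h : f u * f v < 0) : ∃ x ∈ Set.Icc u v, f x = 0 := by
  rcases mul_neg_iff.mp h with ⟨hu, hv⟩ | ⟨hu, hv⟩
  · obtain ⟨x, hx, hfx⟩ := intermediate_value_Icc' huv hf.continuousOn
      (Set.mem_Icc.mpr ⟨hv.le, hu.le⟩)
    exact ⟨x, hx, hfx⟩
  · obtain ⟨x, hx, hfx⟩ := intermediate_value_Icc huv hf.continuousOn
      (Set.mem_Icc.mpr ⟨hu.le, hv.le⟩)
    exact ⟨x, hx, hfx⟩

private lemma stmt9_sign_change (p : Polynomial ℝ) (a : ℝ) (hroot : p.eval a = 0)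
    (hder : (derivative p).eval a ≠ 0) :
    ∃ u v : ℝ, u ≤ v ∧ p.eval u * p.eval v < 0 := by
  set q := p /ₘ (X - C a) with hq
  have hfac : (X - C a) * q = p := mul_divByMonic_eq_iff_isRoot.mpr hroot
  have hqa : q.eval a ≠ 0 := by
    have hd : derivative p = q + (X - C a) * derivative q := by
      rw [← hfac, derivative_mul]; simp
    have := hder
    rw [hd] at this
    simpa using this
  have hcont : Continuous fun t : ℝ => q.eval t := q.continuous
  have h2 : ∀ᶠ t in nhds a, q.eval t ≠ 0 :=
    (hcont.continuousAt).eventually_ne hqa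
  obtain ⟨δ', hδ'pos, hδ'⟩ := Metric.eventually_nhds_iff.mp h2
  set δ := δ' / 2 with hδdef
  have hδpos : 0 < δ := by positivity
  have hne : ∀ t, |t - a| ≤ δ → q.eval t ≠ 0 := by
    intro t ht
    apply hδ'
    rw [Real.dist_eq]
    linarith
  have hqprod : 0 < q.eval (a - δ) * q.eval (a + δ) := by
    rcases lt_trichotomy (q.eval (a - δ) * q.eval (a + δ)) 0 with h | h | h
    · exfalso
      obtain ⟨t, ht, ht0⟩ := stmt9_ivt_root hcont (by linarith : a - δ ≤ a + δ) h
      exact hne t (by rw [abs_le]; constructor <;> [linarith [ht.1]; linarith [ht.2]]) ht0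
    · exfalso
      rcases mul_eq_zero.mp h with h | h
      · exact hne (a - δ) (by rw [abs_le]; constructor <;> linarith) h
      · exact hne (a + δ) (by rw [abs_le]; constructor <;> linarith) h
    · exact h
  refine ⟨a - δ, a + δ, by linarith, ?_⟩
  have e1 : p.eval (a - δ) = -δ * q.eval (a - δ) := by
    rw [← hfac]; simp
  have e2 : p.eval (a + δ) = δ * q.eval (a + δ) := by
    rw [← hfac]; simp
  rw [e1, e2]
  nlinarith [mul_pos (mul_pos hδpos hδpos) hqprod]

/-- Let `n ∈ (ℝ[y])[x]` be nonzero with positive degree in `x`.  If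
`S = {y | ∃ x, n(x,y) = 0}` is nonempty and bounded above with supremum `y*`, then either
there is `x*` with `n(x*,y*) = 0` and `(∂n/∂x)(x*,y*) = 0`, or `Lc_x(n)(y*) = 0`. -/
theorem stmt9 (n : Polynomial (Polynomial ℝ)) (hn0 : n ≠ 0) (hdeg : 0 < n.natDegree)
    (hne : {y : ℝ | ∃ x : ℝ, (n.eval (Polynomial.C x)).eval y = 0}.Nonempty)
    (hbdd : BddAbove {y : ℝ | ∃ x : ℝ, (n.eval (Polynomial.C x)).eval y = 0}) :
    (∃ xstar : ℝ,
        (n.eval (Polynomial.C xstar)).eval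
            (sSup {y : ℝ | ∃ x : ℝ, (n.eval (Polynomial.C x)).eval y = 0}) = 0 ∧
        (((Polynomial.derivative n).eval (Polynomial.C xstar)).eval
            (sSup {y : ℝ | ∃ x : ℝ, (n.eval (Polynomial.C x)).eval y = 0})) = 0) ∨
      n.leadingCoeff.eval
          (sSup {y : ℝ | ∃ x : ℝ, (n.eval (Polynomial.C x)).eval y = 0}) = 0 := by
  set S := {y : ℝ | ∃ x : ℝ, (n.eval (Polynomial.C x)).eval y = 0} with hSdef
  set ys := sSup S with hysdef
  by_contra hcon
  push_neg at hcon
  obtain ⟨hA, hB⟩ := hcon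
  set d := n.natDegree with hd
  -- joint continuity of F(x,y) = n(x,y)
  have hFcont : Continuous fun z : ℝ × ℝ => (n.eval (C z.1)).eval z.2 := by
    have heq : (fun z : ℝ × ℝ => (n.eval (C z.1)).eval z.2)
        = fun z : ℝ × ℝ => ∑ i ∈ Finset.range (d + 1), (n.coeff i).eval z.2 * z.1 ^ i := by
      funext z; exact stmt9_Feq n z.1 z.2
    rw [heq]
    exact continuous_finset_sum _ fun i _ =>
      (((n.coeff i).continuous).comp continuous_snd).mul (continuous_fst.pow i)
  -- a sequence in S tending to the supremum
  obtain ⟨u0, hu0mono, hu0tend, hu0mem⟩ := exists_seq_tendsto_sSup hne hbdd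
  choose x0 hx0 using fun k => hu0mem k
  -- lower bound for the leading coefficient near ys
  set L := n.leadingCoeff with hL
  set c := |L.eval ys| / 2 with hc
  have hc0 : 0 < c := by
    rw [hc]
    have := abs_pos.mpr hB
    linarith
  have hLtend : Filter.Tendsto (fun k => |L.eval (u0 k)|) Filter.atTop (nhds |L.eval ys|) :=
    ((continuous_abs.comp L.continuous).tendsto ys).comp hu0tend
  have hev1 : ∀ᶠ k in Filter.atTop, c < |L.eval (u0 k)| :=
    hLtend.eventually_const_lt (by rw [hc]; have := abs_pos.mpr hB; linarith)
  -- uniform bound on the other coefficients near ys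
  set g : ℝ → ℝ := fun y => ∑ i ∈ Finset.range d, |(n.coeff i).eval y| with hg
  have hgcont : Continuous g :=
    continuous_finset_sum _ fun i _ => continuous_abs.comp (n.coeff i).continuous
  set M := g ys + 1 with hM
  have hgtend : Filter.Tendsto (fun k => g (u0 k)) Filter.atTop (nhds (g ys)) :=
    (hgcont.tendsto ys).comp hu0tend
  have hev2 : ∀ᶠ k in Filter.atTop, g (u0 k) < M := by
    apply hgtend.eventually (eventually_lt_nhds (by rw [hM]; linarith))
  obtain ⟨K, hK⟩ := Filter.eventually_atTop.mp (hev1.and hev2)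
  -- shifted sequences
  set w : ℕ → ℝ := fun k => u0 (k + K) with hw
  set v : ℕ → ℝ := fun k => x0 (k + K) with hv
  have hwtend : Filter.Tendsto w Filter.atTop (nhds ys) :=
    hu0tend.comp (Filter.tendsto_add_atTop_nat K)
  have hroots : ∀ k, (n.eval (C (v k))).eval (w k) = 0 := fun k => hx0 (k + K)
  set B := max 1 ((d : ℝ) * M / c) with hB'
  have hbound : ∀ k, |v k| ≤ B := by
    intro k
    have hk := hK (k + K) (by omega)
    apply stmt9_root_bound (n.map (evalRingHom (w k))) d c M hdeg
      natDegree_map_le hc0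
    · have e0 : n.coeff d = L := by rw [hd, hL]; exact coeff_natDegree
      rw [coeff_map, e0]
      simp only [coe_evalRingHom]
      exact (hk.1).le
    · intro i hi
      rw [coeff_map]
      have h1 : |(n.coeff i).eval (w k)| ≤ g (w k) := by
        rw [hg]
        exact Finset.single_le_sum (f := fun i => |(n.coeff i).eval (w k)|)
          (fun j _ => abs_nonneg _) (Finset.mem_range.mpr hi)
      exact h1.trans (le_of_lt hk.2)
    · rw [← stmt9_key]
      exact hroots k
  have hvmem : ∀ k, v k ∈ Set.Icc (-B) B := by
    intro k
    rcases abs_le.mp (hbound k) with ⟨h1, h2⟩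
    exact Set.mem_Icc.mpr ⟨h1, h2⟩
  obtain ⟨xstar, _, φ, hφ, hvφ⟩ := (isCompact_Icc (a := -B) (b := B)).tendsto_subseq hvmem
  have hwφ : Filter.Tendsto (w ∘ φ) Filter.atTop (nhds ys) :=
    hwtend.comp hφ.tendsto_atTop
  -- the limit point is a root at ys
  have htend2 : Filter.Tendsto (fun k => (n.eval (C (v (φ k)))).eval (w (φ k)))
      Filter.atTop (nhds ((n.eval (C xstar)).eval ys)) :=
    (hFcont.tendsto (xstar, ys)).comp (hvφ.prodMk_nhds hwφ)
  have hroot_star : (n.eval (C xstar)).eval ys = 0 := by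
    have hz : (fun k => (n.eval (C (v (φ k)))).eval (w (φ k))) = fun _ => (0:ℝ) := by
      funext k; exact hroots (φ k)
    rw [hz] at htend2
    exact tendsto_nhds_unique htend2 tendsto_const_nhds
  -- the derivative does not vanish there
  have hder_star : ((derivative n).eval (C xstar)).eval ys ≠ 0 := hA xstar hroot_star
  set p := n.map (evalRingHom ys) with hp
  have hp1 : p.eval xstar = 0 := by rw [hp, ← stmt9_key]; exact hroot_star
  have hp2 : (derivative p).eval xstar ≠ 0 := by
    rw [hp, derivative_map, ← stmt9_key]
    exact hder_star
  obtain ⟨u', v', huv, hsign⟩ := stmt9_sign_change p xstar hp1 hp2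
  -- transfer the sign change to values of n
  have hsign' : (n.eval (C u')).eval ys * (n.eval (C v')).eval ys < 0 := by
    rw [stmt9_key n u' ys, stmt9_key n v' ys]
    exact hsign
  set G : ℝ → ℝ := fun y => (n.eval (C u')).eval y * (n.eval (C v')).eval y with hG
  have hGcont : Continuous G :=
    ((n.eval (C u')).continuous).mul ((n.eval (C v')).continuous)
  have hGys : G ys < 0 := hsign'
  have hGev : G ⁻¹' Set.Iio 0 ∈ nhds ys :=
    (hGcont.tendsto ys) (Iio_mem_nhds hGys)
  obtain ⟨δ, hδpos, hδ⟩ := Metric.mem_nhds_iff.mp hGev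
  set y' := ys + δ / 2 with hy'
  have hy'G : G y' < 0 := by
    apply hδ
    rw [Metric.mem_ball, Real.dist_eq, hy']
    rw [abs_of_nonneg (by linarith)]
    linarith
  -- a root above the supremum: contradiction
  have hfy'cont : Continuous fun x : ℝ => (n.eval (C x)).eval y' :=
    hFcont.comp (continuous_id.prodMk continuous_const)
  obtain ⟨x'', _, hx''⟩ := stmt9_ivt_root hfy'cont huv hy'G
  have hy'S : y' ∈ S := ⟨x'', hx''⟩
  have : y' ≤ ys := le_csSup hbdd hy'S
  rw [hy'] at this
  linarith
end

section
/- Let A, B, C, D be real matrices of sizes n×n, n×m, p×n, p×m respectively, and assume that A has no purely imaginary eigenvalue, i.e., for every ω ∈ ℝ, iω is not in the complex spectrum of A. For ω ∈ ℝ let G(iω) := Cℂ (iω • 1_n − Aℂ)⁻¹ Bℂ + Dℂ (subscript ℂ denoting entrywise coercion to ℂ), and assume the set {‖G(iω)‖ : ω ∈ ℝ} is bounded above. Let γ > 0, set R := γ² • 1_m − Dᵀ D, and define the real 2n × 2n block matrix H_γ := [[A + B R⁻¹ Dᵀ C, B R⁻¹ Bᵀ], [−Cᵀ (1_p + D R⁻¹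 Dᵀ) C, −(A + B R⁻¹ Dᵀ C)ᵀ]]. Then sup_{ω ∈ ℝ} ‖G(iω)‖ < γ if and only if ‖D‖ < γ and H_γ has no purely imaginary eigenvalue, i.e., for every ω ∈ ℝ, iω is not in the complex spectrum of H_γ. -/
open Matrix
open scoped Matrix.Norms.L2Operator

section Aux

open Filter
open scoped Topology ComplexOrder

noncomputable instance matrixCStarAlgebra {m : ℕ} : CStarAlgebra (Matrix (Fin m) (Fin m) ℂ) :=
  Matrix.instCStarAlgebra

/-- spectrum membership via eigenvectors. -/
theorem stmt12_mem_spec_iff {k : Type*} [Fintype k] [DecidableEq k]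
    (M : Matrix k k ℂ) (z : ℂ) :
    z ∈ spectrum ℂ M ↔ ∃ v, v ≠ 0 ∧ M *ᵥ v = z • v := by
  rw [spectrum.mem_iff, Matrix.isUnit_iff_isUnit_det, isUnit_iff_ne_zero, not_not,
    ← Matrix.exists_mulVec_eq_zero_iff]
  have key : ∀ v, (algebraMap ℂ (Matrix k k ℂ) z - M) *ᵥ v = z • v - M *ᵥ v := by
    intro v
    rw [Matrix.sub_mulVec, Algebra.algebraMap_eq_smul_one, Matrix.smul_mulVec,
      Matrix.one_mulVec]
  constructor
  · rintro ⟨v, hv, h⟩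
    exact ⟨v, hv, by rw [key] at h; rw [eq_comm, ← sub_eq_zero]; simpa using h⟩
  · rintro ⟨v, hv, h⟩
    exact ⟨v, hv, by rw [key, h, sub_self]⟩

/-- Euclidean norm squared, complex case. -/
lemma stmt12_euc_norm_sq {m : ℕ} (x : EuclideanSpace ℂ (Fin m)) : ‖x‖ ^ 2 = ∑ j, ‖x j‖ ^ 2 := by
  rw [EuclideanSpace.norm_eq, Real.sq_sqrt]; positivity

/-- Euclidean norm squared, real case. -/
lemma stmt12_euc_norm_sq' {m : ℕ} (x : EuclideanSpace ℝ (Fin m)) : ‖x‖ ^ 2 = ∑ j, (x j) ^ 2 := by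
  rw [EuclideanSpace.norm_eq, Real.sq_sqrt]
  · simp [sq_abs]
  · positivity

lemma stmt12_mulVec_norm_sq_le {p m : ℕ} (M : Matrix (Fin p) (Fin m) ℝ) (u : Fin m → ℝ) :
    ∑ i, (M *ᵥ u) i ^ 2 ≤ ‖M‖ ^ 2 * ∑ j, u j ^ 2 := by
  have h := M.l2_opNorm_mulVec ((WithLp.equiv 2 (Fin m → ℝ)).symm u)
  have hsq := mul_self_le_mul_self (norm_nonneg _) h
  calc ∑ i, (M *ᵥ u) i ^ 2
      = ‖(EuclideanSpace.equiv (Fin p) ℝ).symm (M *ᵥ ((WithLp.equiv 2 (Fin m → ℝ)).symm u))‖ ^ 2 := by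
        rw [stmt12_euc_norm_sq']; rfl
    _ ≤ (‖M‖ * ‖(WithLp.equiv 2 (Fin m → ℝ)).symm u‖) ^ 2 := by
        rw [sq, sq]; exact hsq
    _ = ‖M‖ ^ 2 * ∑ j, u j ^ 2 := by
        rw [mul_pow, stmt12_euc_norm_sq']; rfl

/-- The L2 operator norm is preserved by complexification. -/
lemma stmt12_norm_map_complex {p m : ℕ} (M : Matrix (Fin p) (Fin m) ℝ) :
    ‖M.map (algebraMap ℝ ℂ)‖ = ‖M‖ := by
  apply le_antisymm
  · rw [l2_opNorm_def]
    apply ContinuousLinearMap.opNorm_le_bound _ (norm_nonneg M)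
    intro x
    set u : Fin m → ℝ := fun j => (x j).re with hu
    set v : Fin m → ℝ := fun j => (x j).im with hv
    have key : ∀ i, (M.map (algebraMap ℝ ℂ) *ᵥ (x : Fin m → ℂ)) i
        = Complex.mk ((M *ᵥ u) i) ((M *ᵥ v) i) := by
      intro i
      rw [Complex.ext_iff]
      constructor <;> simp [Complex.re_sum, Complex.im_sum, hu, hv, Matrix.mulVec,
        dotProduct]
    have hx2 : ‖x‖ ^ 2 = (∑ j, u j ^ 2) + ∑ j, v j ^ 2 := by
      rw [stmt12_euc_norm_sq, ← Finset.sum_add_distrib]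
      congr 1; ext j
      rw [← Complex.normSq_eq_norm_sq, Complex.normSq_apply]
      ring
    have lhs_sq : ‖(toEuclideanLin.trans LinearMap.toContinuousLinearMap) (M.map (algebraMap ℝ ℂ)) x‖ ^ 2
        = (∑ i, (M *ᵥ u) i ^ 2) + ∑ i, (M *ᵥ v) i ^ 2 := by
      have heq : ((toEuclideanLin.trans LinearMap.toContinuousLinearMap) (M.map (algebraMap ℝ ℂ)) x : EuclideanSpace ℂ (Fin p))
          = (EuclideanSpace.equiv (Fin p) ℂ).symm (M.map (algebraMap ℝ ℂ) *ᵥ (x : Fin m → ℂ)) := rfl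
      rw [heq, stmt12_euc_norm_sq, ← Finset.sum_add_distrib]
      congr 1; ext i
      show ‖(M.map (algebraMap ℝ ℂ) *ᵥ (x : Fin m → ℂ)) i‖ ^ 2 = _
      rw [key i, ← Complex.normSq_eq_norm_sq, Complex.normSq_apply]
      simp only []
      ring
    have sq_ineq : ‖(toEuclideanLin.trans LinearMap.toContinuousLinearMap) (M.map (algebraMap ℝ ℂ)) x‖ ^ 2
        ≤ (‖M‖ * ‖x‖) ^ 2 := by
      rw [lhs_sq, mul_pow, hx2, mul_add]
      exact add_le_add (stmt12_mulVec_norm_sq_le M u) (stmt12_mulVec_norm_sq_le M v)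
    have h1 := Real.sqrt_le_sqrt sq_ineq
    rwa [Real.sqrt_sq (norm_nonneg _), Real.sqrt_sq (by positivity)] at h1
  · rw [l2_opNorm_def]
    apply ContinuousLinearMap.opNorm_le_bound _ (norm_nonneg _)
    intro x
    set xc : EuclideanSpace ℂ (Fin m) := WithLp.toLp 2 (fun j => (x j : ℂ)) with hxc
    have hnx : ‖xc‖ = ‖x‖ := by
      rw [EuclideanSpace.norm_eq, EuclideanSpace.norm_eq]
      congr 1; congr 1; ext j
      simp [hxc]
    have key : ∀ i, (M.map (algebraMap ℝ ℂ) *ᵥ (xc : Fin m → ℂ)) i = ((M *ᵥ x) i : ℂ) := by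
      intro i
      simp [hxc, Matrix.mulVec, dotProduct]
    have h := (M.map (algebraMap ℝ ℂ)).l2_opNorm_mulVec xc
    have hn2 : ‖(EuclideanSpace.equiv (Fin p) ℂ).symm (M.map (algebraMap ℝ ℂ) *ᵥ (xc : Fin m → ℂ))‖
        = ‖(toEuclideanLin.trans LinearMap.toContinuousLinearMap) M x‖ := by
      rw [EuclideanSpace.norm_eq, EuclideanSpace.norm_eq]
      congr 1; congr 1; ext i
      rw [show ((EuclideanSpace.equiv (Fin p) ℂ).symm (M.map (algebraMap ℝ ℂ) *ᵥ (xc : Fin m → ℂ))) i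
          = (M.map (algebraMap ℝ ℂ) *ᵥ (xc : Fin m → ℂ)) i from rfl, key i]
      simp
    rw [← hn2, ← hnx]
    exact h

/-- The key algebraic lemma relating eigenvectors of the Hamiltonian to
"singular vectors" of the transfer matrix. -/
lemma stmt12_key_ham {K : Type*} [Field K] {n m p : Type*} [Fintype n] [Fintype m] [Fintype p]
    [DecidableEq n] [DecidableEq m] [DecidableEq p]
    (A : Matrix n n K) (B : Matrix n m K) (C : Matrix p n K) (D : Matrix p m K)
    (R : Matrix m m K) (γ2 : K) (s : K)
    (hR : R = γ2 • (1 : Matrix m m K) - Dᵀ * D)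
    (hRu : IsUnit R.det)
    (hF : IsUnit (s • (1 : Matrix n n K) - A).det)
    (hF' : IsUnit (s • (1 : Matrix n n K) + Aᵀ).det) :
    (∃ z ≠ 0, (fromBlocks (A + B * R⁻¹ * Dᵀ * C) (B * R⁻¹ * Bᵀ)
        (-(Cᵀ * ((1 : Matrix p p K) + D * R⁻¹ * Dᵀ) * C)) (-(A + B * R⁻¹ * Dᵀ * C)ᵀ)) *ᵥ z
        = s • z) ↔
    (∃ u ≠ 0, ((Dᵀ - Bᵀ * (s • (1 : Matrix n n K) + Aᵀ)⁻¹ * Cᵀ) *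
        (C * (s • (1 : Matrix n n K) - A)⁻¹ * B + D)) *ᵥ u = γ2 • u) := by
  set F : Matrix n n K := s • 1 - A with hFdef
  set F' : Matrix n n K := s • 1 + Aᵀ with hF'def
  have hRsym : Rᵀ = R := by rw [hR]; simp [transpose_smul, Matrix.transpose_sub,
    Matrix.transpose_mul]
  have hRinvsym : (R⁻¹)ᵀ = R⁻¹ := by rw [Matrix.transpose_nonsing_inv, hRsym]
  have hFmul : ∀ v : n → K, F *ᵥ v = s • v - A *ᵥ v := by
    intro v; rw [hFdef, Matrix.sub_mulVec, Matrix.smul_mulVec, Matrix.one_mulVec]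
  have hF'mul : ∀ v : n → K, F' *ᵥ v = s • v + Aᵀ *ᵥ v := by
    intro v; rw [hF'def, Matrix.add_mulVec, Matrix.smul_mulVec, Matrix.one_mulVec]
  have hFinv : ∀ v : n → K, F⁻¹ *ᵥ (F *ᵥ v) = v := by
    intro v; rw [Matrix.mulVec_mulVec, Matrix.nonsing_inv_mul _ hF, Matrix.one_mulVec]
  have hFinv' : ∀ v : n → K, F *ᵥ (F⁻¹ *ᵥ v) = v := by
    intro v; rw [Matrix.mulVec_mulVec, Matrix.mul_nonsing_inv _ hF, Matrix.one_mulVec]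
  have hF'inv : ∀ v : n → K, F'⁻¹ *ᵥ (F' *ᵥ v) = v := by
    intro v; rw [Matrix.mulVec_mulVec, Matrix.nonsing_inv_mul _ hF', Matrix.one_mulVec]
  have hF'inv' : ∀ v : n → K, F' *ᵥ (F'⁻¹ *ᵥ v) = v := by
    intro v; rw [Matrix.mulVec_mulVec, Matrix.mul_nonsing_inv _ hF', Matrix.one_mulVec]
  have hRmul : ∀ v : m → K, R *ᵥ (R⁻¹ *ᵥ v) = v := by
    intro v; rw [Matrix.mulVec_mulVec, Matrix.mul_nonsing_inv _ hRu, Matrix.one_mulVec]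
  have hG'G : ∀ u : m → K, ((Dᵀ - Bᵀ * F'⁻¹ * Cᵀ) * (C * F⁻¹ * B + D)) *ᵥ u
      = Dᵀ *ᵥ (C *ᵥ (F⁻¹ *ᵥ (B *ᵥ u)) + D *ᵥ u)
        - Bᵀ *ᵥ (F'⁻¹ *ᵥ (Cᵀ *ᵥ (C *ᵥ (F⁻¹ *ᵥ (B *ᵥ u)) + D *ᵥ u))) := by
    intro u
    simp only [Matrix.sub_mul, Matrix.mul_add, Matrix.add_mul, Matrix.sub_mulVec,
      Matrix.add_mulVec, Matrix.mulVec_add, Matrix.mulVec_sub, ← Matrix.mulVec_mulVec,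
      Matrix.mul_assoc]
    abel
  constructor
  · rintro ⟨z, hz, hzeq⟩
    set x : n → K := z ∘ Sum.inl with hx
    set y : n → K := z ∘ Sum.inr with hy
    rw [Matrix.fromBlocks_mulVec] at hzeq
    have E1 : (A + B * R⁻¹ * Dᵀ * C) *ᵥ x + (B * R⁻¹ * Bᵀ) *ᵥ y = s • x := by
      funext i; have := congrFun hzeq (Sum.inl i); simp at this ⊢; exact this
    have E2 : (-(Cᵀ * ((1 : Matrix p p K) + D * R⁻¹ * Dᵀ) * C)) *ᵥ x
        + (-(A + B * R⁻¹ * Dᵀ * C)ᵀ) *ᵥ y = s • y := by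
      funext i; have := congrFun hzeq (Sum.inr i); simp at this ⊢; exact this
    set u : m → K := R⁻¹ *ᵥ ((Dᵀ * C) *ᵥ x + Bᵀ *ᵥ y) with hu
    have hBu : B *ᵥ u = (B * R⁻¹ * Dᵀ * C) *ᵥ x + (B * R⁻¹ * Bᵀ) *ᵥ y := by
      rw [hu]
      simp only [Matrix.mulVec_add, Matrix.mulVec_mulVec, Matrix.mul_assoc]
    have hRu' : R *ᵥ u = (Dᵀ * C) *ᵥ x + Bᵀ *ᵥ y := hRmul _
    have claim1 : F *ᵥ x = B *ᵥ u := by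
      rw [hFmul, hBu, ← E1]
      simp only [Matrix.add_mulVec]
      abel
    have hxval : x = F⁻¹ *ᵥ (B *ᵥ u) := by rw [← claim1, hFinv]
    set w : p → K := C *ᵥ x + D *ᵥ u with hw
    have hDu : D *ᵥ u = (D * R⁻¹ * Dᵀ * C) *ᵥ x + (D * R⁻¹ * Bᵀ) *ᵥ y := by
      rw [hu]
      simp only [Matrix.mulVec_add, Matrix.mulVec_mulVec, Matrix.mul_assoc]
    have claim2 : F' *ᵥ y = -(Cᵀ *ᵥ w) := by
      rw [hF'mul, ← E2, hw, hDu]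
      simp only [Matrix.neg_mulVec, Matrix.add_mulVec, Matrix.sub_mulVec,
        Matrix.transpose_add, Matrix.transpose_mul, Matrix.transpose_transpose, hRinvsym,
        Matrix.add_mul, Matrix.mul_add, Matrix.mul_one, Matrix.one_mul,
        Matrix.mulVec_add, Matrix.mulVec_sub, Matrix.mulVec_neg,
        ← Matrix.mulVec_mulVec, Matrix.mul_assoc, neg_add]
      abel
    have hyval : y = -(F'⁻¹ *ᵥ (Cᵀ *ᵥ w)) := by
      rw [← hF'inv y, claim2, Matrix.mulVec_neg]
    have hune : u ≠ 0 := by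
      intro h0
      apply hz
      have hx0 : x = 0 := by rw [hxval, h0]; simp
      have hw0 : w = 0 := by rw [hw, hx0, h0]; simp
      have hy0 : y = 0 := by rw [hyval, hw0]; simp
      funext i
      rcases i with i | i
      · exact congrFun hx0 i
      · exact congrFun hy0 i
    refine ⟨u, hune, ?_⟩
    rw [hG'G, ← hxval, ← hw]
    have hcw : F'⁻¹ *ᵥ (Cᵀ *ᵥ w) = -y := by rw [hyval]; simp
    rw [hcw, Matrix.mulVec_neg, sub_neg_eq_add]
    have hγ2u : γ2 • u = R *ᵥ u + (Dᵀ * D) *ᵥ u := by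
      rw [hR, Matrix.sub_mulVec, Matrix.smul_mulVec, Matrix.one_mulVec]
      abel
    rw [hγ2u, hRu', hw]
    simp only [Matrix.mulVec_add, Matrix.mulVec_mulVec, Matrix.mul_assoc,
      ← Matrix.mulVec_mulVec]
    abel
  · rintro ⟨u, hu0, hueq⟩
    set x : n → K := F⁻¹ *ᵥ (B *ᵥ u) with hx
    set w : p → K := C *ᵥ x + D *ᵥ u with hw
    set y : n → K := -(F'⁻¹ *ᵥ (Cᵀ *ᵥ w)) with hy
    have claim1 : F *ᵥ x = B *ᵥ u := by rw [hx, hFinv']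
    have claim2 : F' *ᵥ y = -(Cᵀ *ᵥ w) := by
      calc F' *ᵥ y = -(F' *ᵥ (F'⁻¹ *ᵥ (Cᵀ *ᵥ w))) := by rw [hy, Matrix.mulVec_neg]
      _ = -(Cᵀ *ᵥ w) := by rw [hF'inv']
    have hG : ((Dᵀ - Bᵀ * F'⁻¹ * Cᵀ) * (C * F⁻¹ * B + D)) *ᵥ u = Dᵀ *ᵥ w + Bᵀ *ᵥ y := by
      rw [hG'G, ← hx, ← hw, hy, Matrix.mulVec_neg]
      abel
    have hRuval : R *ᵥ u = (Dᵀ * C) *ᵥ x + Bᵀ *ᵥ y := by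
      have h1 : γ2 • u = Dᵀ *ᵥ w + Bᵀ *ᵥ y := by rw [← hG, hueq]
      rw [hR, Matrix.sub_mulVec, Matrix.smul_mulVec, Matrix.one_mulVec, h1, hw]
      simp only [Matrix.mulVec_add, Matrix.mulVec_mulVec, Matrix.mul_assoc,
        ← Matrix.mulVec_mulVec]
      abel
    have huval : u = R⁻¹ *ᵥ ((Dᵀ * C) *ᵥ x + Bᵀ *ᵥ y) := by
      rw [← hRuval, Matrix.mulVec_mulVec, Matrix.nonsing_inv_mul _ hRu, Matrix.one_mulVec]
    have hBu : B *ᵥ u = (B * R⁻¹ * Dᵀ * C) *ᵥ x + (B * R⁻¹ * Bᵀ) *ᵥ y := by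
      conv_lhs => rw [huval]
      simp only [Matrix.mulVec_add, Matrix.mulVec_mulVec, Matrix.mul_assoc]
    have hDu : D *ᵥ u = (D * R⁻¹ * Dᵀ * C) *ᵥ x + (D * R⁻¹ * Bᵀ) *ᵥ y := by
      conv_lhs => rw [huval]
      simp only [Matrix.mulVec_add, Matrix.mulVec_mulVec, Matrix.mul_assoc]
    refine ⟨Sum.elim x y, ?_, ?_⟩
    · intro h0
      apply hu0
      have hx0 : x = 0 := by funext i; exact congrFun h0 (Sum.inl i)
      have hy0 : y = 0 := by funext i; exact congrFun h0 (Sum.inr i)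
      rw [huval, hx0, hy0]
      simp
    · rw [Matrix.fromBlocks_mulVec]
      have hl : (Sum.elim x y) ∘ Sum.inl = x := rfl
      have hr : (Sum.elim x y) ∘ Sum.inr = y := rfl
      rw [hl, hr]
      have E1 : (A + B * R⁻¹ * Dᵀ * C) *ᵥ x + (B * R⁻¹ * Bᵀ) *ᵥ y = s • x := by
        have hsx : s • x = A *ᵥ x + B *ᵥ u := by rw [← claim1, hFmul]; abel
        rw [hsx, hBu, Matrix.add_mulVec]
        abel
      have E2 : (-(Cᵀ * ((1 : Matrix p p K) + D * R⁻¹ * Dᵀ) * C)) *ᵥ x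
          + (-(A + B * R⁻¹ * Dᵀ * C)ᵀ) *ᵥ y = s • y := by
        have hsy : s • y = -(Cᵀ *ᵥ w) - Aᵀ *ᵥ y := by rw [← claim2, hF'mul]; abel
        rw [hsy, hw, hDu]
        simp only [Matrix.neg_mulVec, Matrix.add_mulVec, Matrix.sub_mulVec,
          Matrix.transpose_add, Matrix.transpose_mul, Matrix.transpose_transpose, hRinvsym,
          Matrix.add_mul, Matrix.mul_add, Matrix.mul_one, Matrix.one_mul,
          Matrix.mulVec_add, Matrix.mulVec_sub, Matrix.mulVec_neg,
          ← Matrix.mulVec_mulVec, Matrix.mul_assoc, neg_add]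
        abel
      rw [E1, E2]
      funext i
      rcases i with i | i <;> simp

lemma stmt12_norm_gsq (γ : ℝ) (hγ : 0 ≤ γ) : ‖((γ:ℂ))^2‖ = γ^2 := by
  rw [norm_pow, Complex.norm_real, Real.norm_eq_abs, abs_of_nonneg hγ]

lemma stmt12_spec_le_norm {p m : ℕ} (G : Matrix (Fin p) (Fin m) ℂ) (γ : ℝ) (hγ : 0 < γ)
    (h : ((γ : ℂ))^2 ∈ spectrum ℂ (Gᴴ * G)) : γ ≤ ‖G‖ := by
  rcases Nat.eq_zero_or_pos m with hm | hm
  · subst hm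
    exact absurd (spectrum.mem_iff.mp h) (fun hn => hn (isUnit_of_subsingleton _))
  · have : Nonempty (Fin m) := ⟨⟨0, hm⟩⟩
    have hb := spectrum.norm_le_norm_of_mem h
    rw [Matrix.l2_opNorm_conjTranspose_mul_self, stmt12_norm_gsq γ hγ.le] at hb
    nlinarith [norm_nonneg G]

lemma stmt12_norm_eq_mem_spec {p m : ℕ} (G : Matrix (Fin p) (Fin m) ℂ) (γ : ℝ) (hγ : 0 < γ)
    (h : ‖G‖ = γ) : ((γ : ℂ))^2 ∈ spectrum ℂ (Gᴴ * G) := by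
  rcases Nat.eq_zero_or_pos m with hm | hm
  · exfalso
    subst hm
    have hG0 : G = 0 := by ext i j; exact j.elim0
    rw [hG0, norm_zero] at h
    exact hγ.ne' h.symm
  · have : Nonempty (Fin m) := ⟨⟨0, hm⟩⟩
    set a := Gᴴ * G with ha
    have hHerm : IsHermitian a := Matrix.isHermitian_conjTranspose_mul_self G
    have hsa : IsSelfAdjoint a := hHerm
    have hrad : spectralRadius ℂ a = ‖a‖₊ := hsa.spectralRadius_eq_nnnorm
    obtain ⟨z, hz, hznorm⟩ := spectrum.exists_nnnorm_eq_spectralRadius (a := a)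
    have hzre : z = (z.re : ℂ) := hsa.mem_spectrum_eq_re hz
    have hnorm_a : ‖a‖ = γ^2 := by
      rw [ha, Matrix.l2_opNorm_conjTranspose_mul_self, h]; ring
    have hznorm' : ‖z‖ = γ^2 := by
      have := congrArg ENNReal.toReal (hznorm.trans hrad)
      simpa [coe_nnnorm, hnorm_a] using this
    have hre_mem : z.re ∈ spectrum ℝ a := by
      rw [← spectrum.algebraMap_mem_iff ℂ]
      have hzz : (algebraMap ℝ ℂ) z.re = z := by simpa using hzre.symm
      rwa [hzz]
    have hPSD : a.PosSemidef := Matrix.posSemidef_conjTranspose_mul_self G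
    have hnn : 0 ≤ z.re := by
      rw [hHerm.spectrum_real_eq_range_eigenvalues] at hre_mem
      obtain ⟨i, hi⟩ := hre_mem
      rw [← hi]
      exact hPSD.eigenvalues_nonneg i
    have hzval : z.re = γ^2 := by
      have habs : |z.re| = γ^2 := by
        rw [← Real.norm_eq_abs]
        calc ‖z.re‖ = ‖z‖ := by rw [hzre]; simp
        _ = γ^2 := hznorm'
      rwa [abs_of_nonneg hnn] at habs
    have hzz : z = ((γ:ℂ))^2 := by
      rw [hzre, hzval]; push_cast; ring
    rwa [hzz] at hz

lemma stmt12_cont_res {k : ℕ} (Ac : Matrix (Fin k) (Fin k) ℂ)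
    (hdet : ∀ ω : ℝ, IsUnit (((ω:ℂ) * Complex.I) • (1 : Matrix (Fin k) (Fin k) ℂ) - Ac).det) :
    Continuous fun ω : ℝ => (((ω:ℂ) * Complex.I) • (1 : Matrix (Fin k) (Fin k) ℂ) - Ac)⁻¹ := by
  set F : ℝ → Matrix (Fin k) (Fin k) ℂ :=
    fun ω => ((ω:ℂ) * Complex.I) • (1 : Matrix (Fin k) (Fin k) ℂ) - Ac with hF
  have hFc : Continuous F :=
    ((Complex.continuous_ofReal.mul continuous_const).smul continuous_const).sub continuous_const
  have heq : ∀ ω, (F ω)⁻¹ = ((F ω).det)⁻¹ • (F ω).adjugate := by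
    intro ω
    rw [Matrix.inv_def, Ring.inverse_eq_inv']
  rw [show (fun ω : ℝ => (((ω:ℂ) * Complex.I) • (1 : Matrix (Fin k) (Fin k) ℂ) - Ac)⁻¹) = fun ω => ((F ω).det)⁻¹ • (F ω).adjugate from funext heq]
  exact ((hFc.matrix_det.inv₀ (fun ω => (hdet ω).ne_zero)).smul hFc.matrix_adjugate)

lemma stmt12_tendsto_res {k : ℕ} (Ac : Matrix (Fin k) (Fin k) ℂ)
    (hdet : ∀ ω : ℝ, IsUnit (((ω:ℂ) * Complex.I) • (1 : Matrix (Fin k) (Fin k) ℂ) - Ac).det) :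
    Tendsto (fun ω : ℝ => (((ω:ℂ) * Complex.I) • (1 : Matrix (Fin k) (Fin k) ℂ) - Ac)⁻¹)
      (cocompact ℝ) (𝓝 0) := by
  set c : ℝ → ℂ := fun ω => (ω:ℂ) * Complex.I with hc
  have hcnorm : ∀ ω : ℝ, ‖(c ω)⁻¹‖ = |ω|⁻¹ := by
    intro ω
    rw [norm_inv, hc]
    simp [Complex.norm_real]
  have h1 : Tendsto (fun ω : ℝ => (c ω)⁻¹) (cocompact ℝ) (𝓝 0) := by
    rw [tendsto_zero_iff_norm_tendsto_zero]
    simp only [hcnorm]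
    have habs : Tendsto (fun ω : ℝ => |ω|) (cocompact ℝ) atTop := by
      exact (tendsto_norm_cocompact_atTop (E := ℝ)).congr (fun x => Real.norm_eq_abs x)
    exact habs.inv_tendsto_atTop
  have h2 : Tendsto (fun ω : ℝ => (1 : Matrix (Fin k) (Fin k) ℂ) - (c ω)⁻¹ • Ac)
      (cocompact ℝ) (𝓝 1) := by
    have hsm := (h1.smul_const Ac)
    have h3 := (tendsto_const_nhds (x := (1 : Matrix (Fin k) (Fin k) ℂ))
      (f := cocompact ℝ)).sub hsm
    simpa using h3
  have hinv : Tendsto (fun ω : ℝ => ((1 : Matrix (Fin k) (Fin k) ℂ) - (c ω)⁻¹ • Ac)⁻¹)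
      (cocompact ℝ) (𝓝 1) := by
    have hcont : ContinuousAt Ring.inverse ((1 : (Matrix (Fin k) (Fin k) ℂ)ˣ) : Matrix (Fin k) (Fin k) ℂ) :=
      NormedRing.inverse_continuousAt 1
    have hcomp := hcont.tendsto.comp h2
    simp only [Matrix.nonsing_inv_eq_ringInverse]
    simpa [Function.comp_def] using hcomp.congr (fun ω => rfl)
  have key : ∀ᶠ ω : ℝ in cocompact ℝ, (((ω:ℂ) * Complex.I) • (1 : Matrix (Fin k) (Fin k) ℂ) - Ac)⁻¹
      = (c ω)⁻¹ • ((1 : Matrix (Fin k) (Fin k) ℂ) - (c ω)⁻¹ • Ac)⁻¹ := by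
    have hne : ∀ᶠ ω : ℝ in cocompact ℝ, ω ≠ 0 := by
      have : {(0:ℝ)}ᶜ ∈ cocompact ℝ :=
        mem_cocompact.mpr ⟨{0}, isCompact_singleton, le_refl _⟩
      exact this
    filter_upwards [hne] with ω hω
    have hcne : c ω ≠ 0 := by
      simp [hc, Complex.ext_iff, hω, Complex.I_ne_zero]
    have hfac : ((ω:ℂ) * Complex.I) • (1 : Matrix (Fin k) (Fin k) ℂ) - Ac
        = c ω • ((1 : Matrix (Fin k) (Fin k) ℂ) - (c ω)⁻¹ • Ac) := by
      rw [smul_sub, smul_smul, mul_inv_cancel₀ hcne, one_smul]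
    rw [hfac]
    set M : Matrix (Fin k) (Fin k) ℂ := (1 : Matrix (Fin k) (Fin k) ℂ) - (c ω)⁻¹ • Ac with hM
    have hMdet : IsUnit M.det := by
      have h0 := hdet ω
      rw [hfac, Matrix.det_smul] at h0
      exact (isUnit_of_mul_isUnit_right h0)
    have hsm : (Units.mk0 (c ω) hcne) • M = c ω • M := rfl
    have hval := Matrix.inv_smul' (A := M) (Units.mk0 (c ω) hcne) hMdet
    rw [hsm] at hval
    rw [hval]
    have hval2 : ((Units.mk0 (c ω) hcne)⁻¹ : ℂˣ) • M⁻¹ = (c ω)⁻¹ • M⁻¹ := by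
      rw [Units.smul_def]
      congr 1
    rw [hval2]
  have hcomb : Tendsto (fun ω : ℝ => (c ω)⁻¹ • ((1 : Matrix (Fin k) (Fin k) ℂ) - (c ω)⁻¹ • Ac)⁻¹)
      (cocompact ℝ) (𝓝 0) := by
    have := Tendsto.smul h1 hinv
    simpa using this
  exact Tendsto.congr' (key.mono fun ω h => h.symm) hcomb

set_option linter.unusedSectionVars false

section MapLemmas

variable {I J L : Type*} [Fintype I] [Fintype J] [Fintype L] [DecidableEq I] [DecidableEq J]

lemma stmt12_mapC_mul (M : Matrix I J ℝ) (N : Matrix J L ℝ) :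
    (M * N).map (algebraMap ℝ ℂ) = M.map (algebraMap ℝ ℂ) * N.map (algebraMap ℝ ℂ) :=
  Matrix.map_mul

lemma stmt12_mapC_one : (1 : Matrix I I ℝ).map (algebraMap ℝ ℂ) = 1 :=
  Matrix.map_one _ (map_zero _) (map_one _)

lemma stmt12_mapC_add (M N : Matrix I J ℝ) :
    (M + N).map (algebraMap ℝ ℂ) = M.map (algebraMap ℝ ℂ) + N.map (algebraMap ℝ ℂ) := by
  ext i j; simp

lemma stmt12_mapC_neg (M : Matrix I J ℝ) :
    (-M).map (algebraMap ℝ ℂ) = -(M.map (algebraMap ℝ ℂ)) := by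
  ext i j; simp

lemma stmt12_mapC_transpose (M : Matrix I J ℝ) :
    (Mᵀ).map (algebraMap ℝ ℂ) = (M.map (algebraMap ℝ ℂ))ᵀ :=
  Matrix.transpose_map

lemma stmt12_mapC_conjT (M : Matrix I J ℝ) :
    (M.map (algebraMap ℝ ℂ))ᴴ = Mᵀ.map (algebraMap ℝ ℂ) := by
  ext i j
  simp [Matrix.conjTranspose_apply, Matrix.map_apply, Complex.conj_ofReal]

lemma stmt12_mapC_det_isUnit {M : Matrix I I ℝ} :
    IsUnit (M.map (algebraMap ℝ ℂ)).det ↔ IsUnit M.det := by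
  have hdet : (M.map (algebraMap ℝ ℂ)).det = algebraMap ℝ ℂ M.det := by
    rw [← RingHom.mapMatrix_apply, ← RingHom.map_det]
  rw [hdet, isUnit_iff_ne_zero, isUnit_iff_ne_zero]
  constructor
  · intro h h0; exact h (by rw [h0, map_zero])
  · intro h h0; exact h ((algebraMap ℝ ℂ).injective (by rwa [map_zero]))

lemma stmt12_mapC_inv {M : Matrix I I ℝ} (h : IsUnit M.det) :
    (M.map (algebraMap ℝ ℂ))⁻¹ = M⁻¹.map (algebraMap ℝ ℂ) := by
  apply Matrix.inv_eq_right_inv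
  rw [← stmt12_mapC_mul, Matrix.mul_nonsing_inv _ h, stmt12_mapC_one]

end MapLemmas

end Aux

/-- Let `(A, B, C, D)` be a real state-space realization with `A` having no
purely imaginary eigenvalue, `G(iω) := Cℂ (iω • 1 − Aℂ)⁻¹ Bℂ + Dℂ`, with `{‖G(iω)‖}` bounded
above, and let `γ > 0`, `R := γ² • 1 − Dᵀ D`, and `H_γ` the associated Hamiltonian matrix.
Then `sup_ω ‖G(iω)‖ < γ` iff `‖D‖ < γ` and `H_γ` has no purely imaginary eigenvalue. -/
theorem stmt12 (n m p : ℕ)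
    (A : Matrix (Fin n) (Fin n) ℝ) (B : Matrix (Fin n) (Fin m) ℝ)
    (C : Matrix (Fin p) (Fin n) ℝ) (D : Matrix (Fin p) (Fin m) ℝ)
    (hA : ∀ ω : ℝ, ((ω : ℂ) * Complex.I) ∉ spectrum ℂ (A.map (algebraMap ℝ ℂ)))
    (Gc : ℝ → Matrix (Fin p) (Fin m) ℂ)
    (hGc : ∀ ω : ℝ, Gc ω =
        C.map (algebraMap ℝ ℂ) *
          (((ω : ℂ) * Complex.I) • (1 : Matrix (Fin n) (Fin n) ℂ) - A.map (algebraMap ℝ ℂ))⁻¹ *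
          B.map (algebraMap ℝ ℂ) + D.map (algebraMap ℝ ℂ))
    (hbdd : BddAbove (Set.range fun ω : ℝ => ‖Gc ω‖))
    (γ : ℝ) (hγ : 0 < γ)
    (R : Matrix (Fin m) (Fin m) ℝ)
    (hR : R = γ ^ 2 • (1 : Matrix (Fin m) (Fin m) ℝ) - Dᵀ * D)
    (Hγ : Matrix (Fin n ⊕ Fin n) (Fin n ⊕ Fin n) ℝ)
    (hH : Hγ = Matrix.fromBlocks
        (A + B * R⁻¹ * Dᵀ * C) (B * R⁻¹ * Bᵀ)
        (-(Cᵀ * ((1 : Matrix (Fin p) (Fin p) ℝ) + D * R⁻¹ * Dᵀ) * C))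
        (-(A + B * R⁻¹ * Dᵀ * C)ᵀ)) :
    (⨆ ω : ℝ, ‖Gc ω‖) < γ ↔
      ‖D‖ < γ ∧ ∀ ω : ℝ, ((ω : ℂ) * Complex.I) ∉ spectrum ℂ (Hγ.map (algebraMap ℝ ℂ)) := by
  classical
  have hDH : ∀ {I J : Type} [Fintype I] [Fintype J] (M : Matrix I J ℝ),
      (M.map (algebraMap ℝ ℂ))ᴴ = (M.map (algebraMap ℝ ℂ))ᵀ := by
    intro I J _ _ M
    rw [stmt12_mapC_conjT, stmt12_mapC_transpose]
  set Ac : Matrix (Fin n) (Fin n) ℂ := A.map (algebraMap ℝ ℂ) with hAc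
  set Bc : Matrix (Fin n) (Fin m) ℂ := B.map (algebraMap ℝ ℂ) with hBc
  set Cc : Matrix (Fin p) (Fin n) ℂ := C.map (algebraMap ℝ ℂ) with hCc
  set Dc : Matrix (Fin p) (Fin m) ℂ := D.map (algebraMap ℝ ℂ) with hDc
  set Rc : Matrix (Fin m) (Fin m) ℂ := R.map (algebraMap ℝ ℂ) with hRcdef
  have hFdet : ∀ ω : ℝ, IsUnit (((ω:ℂ) * Complex.I) • (1 : Matrix (Fin n) (Fin n) ℂ) - Ac).det := by
    intro ω
    have h := spectrum.notMem_iff.mp (hA ω)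
    rw [Algebra.algebraMap_eq_smul_one] at h
    exact (Matrix.isUnit_iff_isUnit_det _).mp h
  have hF'det : ∀ ω : ℝ, IsUnit (((ω:ℂ) * Complex.I) • (1 : Matrix (Fin n) (Fin n) ℂ) + Acᵀ).det := by
    intro ω
    have h1 : (((ω:ℂ) * Complex.I) • (1 : Matrix (Fin n) (Fin n) ℂ) + Acᵀ).det
        = (((ω:ℂ) * Complex.I) • (1 : Matrix (Fin n) (Fin n) ℂ) + Ac).det := by
      rw [← Matrix.det_transpose]
      congr 1
      rw [Matrix.transpose_add, Matrix.transpose_smul, Matrix.transpose_one,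
        Matrix.transpose_transpose]
    have h2 : ((ω:ℂ) * Complex.I) • (1 : Matrix (Fin n) (Fin n) ℂ) + Ac
        = -(((((-ω) : ℝ):ℂ) * Complex.I) • (1 : Matrix (Fin n) (Fin n) ℂ) - Ac) := by
      push_cast
      module
    rw [h1, h2, Matrix.det_neg]
    refine ((isUnit_one.neg).pow _).mul (hFdet (-ω))
  have hGfun : Gc = fun ω : ℝ =>
      Cc * (((ω:ℂ) * Complex.I) • (1 : Matrix (Fin n) (Fin n) ℂ) - Ac)⁻¹ * Bc + Dc :=
    funext hGc
  have hcontG : Continuous Gc := by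
    rw [hGfun]
    exact ((continuous_const.matrix_mul (stmt12_cont_res Ac hFdet)).matrix_mul
      continuous_const).add continuous_const
  have hcontN : Continuous fun ω : ℝ => ‖Gc ω‖ := hcontG.norm
  have hφ : Continuous fun M : Matrix (Fin n) (Fin n) ℂ => Cc * M * Bc + Dc :=
    ((continuous_const.matrix_mul continuous_id).matrix_mul continuous_const).add
      continuous_const
  have hlim : Filter.Tendsto Gc (Filter.cocompact ℝ) (nhds Dc) := by
    have h0 := (hφ.tendsto 0).comp (stmt12_tendsto_res Ac hFdet)
    simp only [Matrix.mul_zero, Matrix.zero_mul, zero_add] at h0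
    rw [hGfun]
    exact h0
  have hnormDc : ‖Dc‖ = ‖D‖ := stmt12_norm_map_complex D
  have hlimN : Filter.Tendsto (fun ω : ℝ => ‖Gc ω‖) (Filter.cocompact ℝ) (nhds ‖D‖) := by
    have h1 := (continuous_norm.tendsto Dc).comp hlim
    rw [hnormDc] at h1
    exact h1
  have hDleSup : ‖D‖ ≤ ⨆ ω : ℝ, ‖Gc ω‖ :=
    le_of_tendsto hlimN (Filter.Eventually.of_forall fun ω => le_ciSup hbdd ω)
  have hRcEq : Rc = ((γ:ℂ))^2 • (1 : Matrix (Fin m) (Fin m) ℂ) - Dcᵀ * Dc := by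
    rw [hRcdef, hR]
    have hsub : ∀ (M N : Matrix (Fin m) (Fin m) ℝ),
        (M - N).map (algebraMap ℝ ℂ) = M.map (algebraMap ℝ ℂ) - N.map (algebraMap ℝ ℂ) := by
      intro M N; ext i j; simp
    rw [hsub, stmt12_mapC_mul, stmt12_mapC_transpose]
    congr 1
    ext i j
    by_cases h : i = j <;>
      simp [Matrix.map_apply, Matrix.smul_apply, Matrix.one_apply, h] <;> push_cast <;> ring
  have hRuD : ‖D‖ < γ → IsUnit R.det := by
    intro hDγ
    by_contra hnot
    have hnotC : ¬ IsUnit Rc.det := by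
      rw [hRcdef, stmt12_mapC_det_isUnit]; exact hnot
    have hmem : ((γ:ℂ))^2 ∈ spectrum ℂ (Dcᴴ * Dc) := by
      rw [spectrum.mem_iff]
      intro hu
      apply hnotC
      rw [Matrix.isUnit_iff_isUnit_det] at hu
      have heq : algebraMap ℂ (Matrix (Fin m) (Fin m) ℂ) (((γ:ℂ))^2) - Dcᴴ * Dc = Rc := by
        rw [Algebra.algebraMap_eq_smul_one, hRcEq, hDH D]
      rwa [heq] at hu
    have hle := stmt12_spec_le_norm Dc γ hγ hmem
    rw [hnormDc] at hle
    linarith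
  have hmapH : IsUnit R.det → Hγ.map (algebraMap ℝ ℂ) = Matrix.fromBlocks
      (Ac + Bc * Rc⁻¹ * Dcᵀ * Cc) (Bc * Rc⁻¹ * Bcᵀ)
      (-(Ccᵀ * ((1 : Matrix (Fin p) (Fin p) ℂ) + Dc * Rc⁻¹ * Dcᵀ) * Cc))
      (-(Ac + Bc * Rc⁻¹ * Dcᵀ * Cc)ᵀ) := by
    intro hRu
    rw [hH, Matrix.fromBlocks_map]
    have hRinv : R⁻¹.map (algebraMap ℝ ℂ) = Rc⁻¹ := (stmt12_mapC_inv hRu).symm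
    simp only [stmt12_mapC_add, stmt12_mapC_neg, stmt12_mapC_mul, stmt12_mapC_transpose,
      stmt12_mapC_one, hRinv]
    rfl
  have hGH : ∀ ω : ℝ, (Gc ω)ᴴ = Dcᵀ -
      Bcᵀ * (((ω:ℂ) * Complex.I) • (1 : Matrix (Fin n) (Fin n) ℂ) + Acᵀ)⁻¹ * Ccᵀ := by
    intro ω
    have hFH : ((((ω:ℂ) * Complex.I) • (1 : Matrix (Fin n) (Fin n) ℂ) - Ac)⁻¹)ᴴ
        = (-((((ω:ℂ) * Complex.I)) • (1 : Matrix (Fin n) (Fin n) ℂ) + Acᵀ))⁻¹ := by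
      rw [Matrix.conjTranspose_nonsing_inv]
      congr 1
      rw [Matrix.conjTranspose_sub, Matrix.conjTranspose_smul, Matrix.conjTranspose_one,
        hDH A]
      have hs : star ((ω:ℂ) * Complex.I) = -((ω:ℂ) * Complex.I) := by
        simp [Complex.star_def, _root_.map_mul, Complex.conj_ofReal, Complex.conj_I]
      rw [hs]
      module
    have hneg : (-((((ω:ℂ) * Complex.I)) • (1 : Matrix (Fin n) (Fin n) ℂ) + Acᵀ))⁻¹
        = -(((((ω:ℂ) * Complex.I)) • (1 : Matrix (Fin n) (Fin n) ℂ) + Acᵀ)⁻¹) := by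
      apply Matrix.inv_eq_right_inv
      rw [Matrix.neg_mul, Matrix.mul_neg, neg_neg]
      exact Matrix.mul_nonsing_inv _ (hF'det ω)
    rw [hGc ω, Matrix.conjTranspose_add, Matrix.conjTranspose_mul, Matrix.conjTranspose_mul,
      hFH, hneg, hDH B, hDH C, hDH D]
    rw [Matrix.neg_mul, Matrix.mul_neg]
    rw [sub_eq_add_neg, add_comm]
    congr 1
    rw [Matrix.mul_assoc]
  have hiff : IsUnit R.det → ∀ ω : ℝ,
      (((ω:ℂ) * Complex.I) ∈ spectrum ℂ (Hγ.map (algebraMap ℝ ℂ)) ↔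
        ((γ:ℂ))^2 ∈ spectrum ℂ ((Gc ω)ᴴ * Gc ω)) := by
    intro hRu ω
    have hRuC : IsUnit Rc.det := by
      rw [hRcdef, stmt12_mapC_det_isUnit]; exact hRu
    rw [stmt12_mem_spec_iff, stmt12_mem_spec_iff, hmapH hRu, hGH ω, hGc ω]
    exact stmt12_key_ham Ac Bc Cc Dc Rc (((γ:ℂ))^2) (((ω:ℂ)) * Complex.I) hRcEq hRuC
      (hFdet ω) (hF'det ω)
  constructor
  · intro hsup
    have hDγ : ‖D‖ < γ := lt_of_le_of_lt hDleSup hsup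
    refine ⟨hDγ, fun ω hmem => ?_⟩
    have hRu := hRuD hDγ
    have h2 := (hiff hRu ω).mp hmem
    have h3 := stmt12_spec_le_norm (Gc ω) γ hγ h2
    have h4 : ‖Gc ω‖ ≤ ⨆ ω : ℝ, ‖Gc ω‖ := le_ciSup hbdd ω
    linarith
  · rintro ⟨hDγ, hspec⟩
    have hRu := hRuD hDγ
    have hne : ∀ ω : ℝ, ‖Gc ω‖ ≠ γ := by
      intro ω h
      exact hspec ω ((hiff hRu ω).mpr (stmt12_norm_eq_mem_spec (Gc ω) γ hγ h))
    have hlt : ∀ ω : ℝ, ‖Gc ω‖ < γ := by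
      intro ω₀
      rcases lt_or_gt_of_ne (hne ω₀) with h | h
      · exact h
      · exfalso
        have hev : ∀ᶠ ω in Filter.cocompact ℝ, ‖Gc ω‖ < γ :=
          hlimN.eventually_lt_const hDγ
        obtain ⟨ω₁, hω₁⟩ := hev.exists
        have hIVT := intermediate_value_uIcc (a := ω₀) (b := ω₁)
          (hcontN.continuousOn (s := Set.uIcc ω₀ ω₁))
        have hγmem : γ ∈ Set.uIcc (‖Gc ω₀‖) (‖Gc ω₁‖) := by
          rw [Set.mem_uIcc]
          exact Or.inr ⟨hω₁.le, h.le⟩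
        obtain ⟨c, _, hc⟩ := hIVT hγmem
        exact hne c hc
    set γ' := (γ + ‖D‖)/2 with hγ'
    have hγ'lt : γ' < γ := by rw [hγ']; linarith
    have hDγ' : ‖D‖ < γ' := by rw [hγ']; linarith
    have hev : ∀ᶠ ω in Filter.cocompact ℝ, ‖Gc ω‖ < γ' :=
      hlimN.eventually_lt_const hDγ'
    rw [Filter.eventually_iff, Filter.mem_cocompact] at hev
    obtain ⟨K, hK, hKsub⟩ := hev
    have hKK : IsCompact (K ∪ {0}) := hK.union isCompact_singleton
    have hne0 : (K ∪ {0}).Nonempty := ⟨0, Or.inr rfl⟩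
    obtain ⟨ωm, hmemm, hmax⟩ := hKK.exists_isMaxOn hne0
      (hcontN.continuousOn (s := K ∪ {0}))
    have hboundγ : max γ' (‖Gc ωm‖) < γ := max_lt hγ'lt (hlt ωm)
    have hub : ∀ ω : ℝ, ‖Gc ω‖ ≤ max γ' (‖Gc ωm‖) := by
      intro ω
      by_cases hω : ω ∈ K ∪ {0}
      · exact le_max_of_le_right (hmax hω)
      · have hnK : ω ∈ Kᶜ := fun hh => hω (Or.inl hh)
        have hlt' := hKsub hnK
        exact le_max_of_le_left (le_of_lt hlt')
    exact lt_of_le_of_lt (ciSup_le hub) hboundγ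
end

section
/- Let A, B, C, D be real matrices of sizes n×n, n×m, p×n, p×m respectively, assume that for every ω ∈ ℝ, iω is not in the complex spectrum of A, and let γ > ‖D‖ with γ > 0. Set R := γ² • 1_m − Dᵀ D (which is positive definite since ‖D‖ < γ) and define the real 2n × 2n block matrix H_γ := [[A + B R⁻¹ Dᵀ C, B R⁻¹ Bᵀ], [−Cᵀ (1_p + D R⁻¹ Dᵀ) C, −(A + B R⁻¹ Dᵀ C)ᵀ]]. For ω ∈ ℝ let G(iω) := Cℂ (iω • 1_n − Aℂ)⁻¹ Bℂ + Dℂ (subscript ℂ denoting entrywise coercion to ℂ). Then for every ω ∈ ℝ: det(γ² • 1_m − G(iω)ᴴ · G(iω)) = 0 if and only if iω is in the complex spectrum of H_γ. -/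
open Matrix
open scoped Matrix.Norms.L2Operator

private lemma aux_spec_det {ι : Type*} [Fintype ι] [DecidableEq ι]
    (M : Matrix ι ι ℂ) (z : ℂ) :
    z ∈ spectrum ℂ M ↔ (z • (1 : Matrix ι ι ℂ) - M).det = 0 := by
  rw [spectrum.mem_iff, Matrix.isUnit_iff_isUnit_det, isUnit_iff_ne_zero, not_not,
    Algebra.algebraMap_eq_smul_one]

private lemma aux_conjT {k l : Type*} (M : Matrix k l ℝ) :
    (M.map (algebraMap ℝ ℂ))ᴴ = (M.map (algebraMap ℝ ℂ))ᵀ := by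
  ext i j
  simp [Matrix.conjTranspose_apply, Matrix.map_apply, Complex.conj_ofReal]

private lemma mapC_add {k l : Type*} (M N : Matrix k l ℝ) :
    (M + N).map (algebraMap ℝ ℂ) = M.map (algebraMap ℝ ℂ) + N.map (algebraMap ℝ ℂ) :=
  Matrix.map_add _ (fun a b => by simp) M N

private lemma mapC_sub {k l : Type*} (M N : Matrix k l ℝ) :
    (M - N).map (algebraMap ℝ ℂ) = M.map (algebraMap ℝ ℂ) - N.map (algebraMap ℝ ℂ) :=
  Matrix.map_sub _ (fun a b => by simp) M N

private lemma mapC_neg {k l : Type*} (M : Matrix k l ℝ) :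
    (-M).map (algebraMap ℝ ℂ) = -(M.map (algebraMap ℝ ℂ)) := by
  ext i j; simp

private lemma mapC_one {k : Type*} [Fintype k] [DecidableEq k] :
    (1 : Matrix k k ℝ).map (algebraMap ℝ ℂ) = 1 :=
  Matrix.map_one _ (map_zero _) (map_one _)

private lemma mapC_smul {k l : Type*} (r : ℝ) (M : Matrix k l ℝ) :
    (r • M).map (algebraMap ℝ ℂ) = r • (M.map (algebraMap ℝ ℂ)) := by
  ext i j
  simp [Matrix.map_apply, Complex.real_smul]


private lemma aux_Rdet {m p : ℕ} (D : Matrix (Fin p) (Fin m) ℝ) (γ : ℝ) (hγ : 0 < γ)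
    (hγD : ‖D‖ < γ) : (γ ^ 2 • (1 : Matrix (Fin m) (Fin m) ℝ) - Dᵀ * D).det ≠ 0 := by
  intro hdet
  obtain ⟨v, hv0, hv⟩ := (Matrix.exists_mulVec_eq_zero_iff).2 hdet
  have hDDv : (Dᵀ * D) *ᵥ v = γ ^ 2 • v := by
    have h1 : (γ ^ 2 • (1 : Matrix (Fin m) (Fin m) ℝ) - Dᵀ * D) *ᵥ v
        = γ ^ 2 • v - (Dᵀ * D) *ᵥ v := by
      rw [Matrix.sub_mulVec, Matrix.smul_mulVec, Matrix.one_mulVec]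
    rw [hv] at h1
    exact (sub_eq_zero.mp h1.symm).symm
  have key : (D *ᵥ v) ⬝ᵥ (D *ᵥ v) = γ ^ 2 * (v ⬝ᵥ v) := by
    calc (D *ᵥ v) ⬝ᵥ (D *ᵥ v) = (v ᵥ* Dᵀ) ⬝ᵥ (D *ᵥ v) := by rw [Matrix.vecMul_transpose]
      _ = v ⬝ᵥ (Dᵀ *ᵥ (D *ᵥ v)) := (Matrix.dotProduct_mulVec v Dᵀ (D *ᵥ v)).symm
      _ = v ⬝ᵥ ((Dᵀ * D) *ᵥ v) := by rw [Matrix.mulVec_mulVec]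
      _ = v ⬝ᵥ (γ ^ 2 • v) := by rw [hDDv]
      _ = γ ^ 2 * (v ⬝ᵥ v) := by rw [dotProduct_smul, smul_eq_mul]
  have hxd : ∀ {k : ℕ} (w : Fin k → ℝ),
      ‖(EuclideanSpace.equiv (Fin k) ℝ).symm w‖ ^ 2 = w ⬝ᵥ w := by
    intro k w
    rw [EuclideanSpace.norm_eq, Real.sq_sqrt (by positivity)]
    simp [dotProduct, Real.norm_eq_abs, sq_abs, pow_two]
  set x : EuclideanSpace ℝ (Fin m) := (EuclideanSpace.equiv (Fin m) ℝ).symm v with hxdef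
  have hle := Matrix.l2_opNorm_mulVec D x
  have h2 : γ ^ 2 * ‖x‖ ^ 2 = ‖(EuclideanSpace.equiv (Fin p) ℝ).symm (D *ᵥ v)‖ ^ 2 := by
    rw [hxdef, hxd, hxd, key]
  have hxpos : 0 < ‖x‖ := by
    rw [norm_pos_iff]
    simpa [hxdef] using hv0
  have hDx : ‖(EuclideanSpace.equiv (Fin p) ℝ).symm (D *ᵥ v)‖ ≤ ‖D‖ * ‖x‖ := hle
  have hsq := mul_self_le_mul_self
    (norm_nonneg ((EuclideanSpace.equiv (Fin p) ℝ).symm (D *ᵥ v))) hDx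
  have hsq2 := mul_self_lt_mul_self (norm_nonneg D) hγD
  nlinarith [hsq, hsq2, h2, hxpos, mul_pos hxpos hxpos]

private lemma fromBlocks_sub' {k l : ℕ} (a a' : Matrix (Fin k) (Fin k) ℂ) (b b' : Matrix (Fin k) (Fin l) ℂ)
    (c c' : Matrix (Fin l) (Fin k) ℂ) (d d' : Matrix (Fin l) (Fin l) ℂ) :
    fromBlocks a b c d - fromBlocks a' b' c' d'
      = fromBlocks (a - a') (b - b') (c - c') (d - d') := by
  rw [sub_eq_add_neg, Matrix.fromBlocks_neg, Matrix.fromBlocks_add]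
  simp [sub_eq_add_neg]

set_option maxHeartbeats 1600000 in
/-- Let `(A, B, C, D)` be a real state-space realization with `A` having no
purely imaginary eigenvalue, let `γ > ‖D‖` with `γ > 0`, `R := γ² • 1 − Dᵀ D`, `H_γ` the
associated Hamiltonian matrix, and `G(iω) := Cℂ (iω • 1 − Aℂ)⁻¹ Bℂ + Dℂ`.  Then for every
`ω ∈ ℝ`: `det (γ² • 1 − G(iω)ᴴ G(iω)) = 0` iff `iω` is in the complex spectrum of `H_γ`. -/
theorem stmt13 (n m p : ℕ)
    (A : Matrix (Fin n) (Fin n) ℝ) (B : Matrix (Fin n) (Fin m) ℝ)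
    (C : Matrix (Fin p) (Fin n) ℝ) (D : Matrix (Fin p) (Fin m) ℝ)
    (hA : ∀ ω : ℝ, ((ω : ℂ) * Complex.I) ∉ spectrum ℂ (A.map (algebraMap ℝ ℂ)))
    (γ : ℝ) (hγ : 0 < γ) (hγD : ‖D‖ < γ)
    (R : Matrix (Fin m) (Fin m) ℝ)
    (hR : R = γ ^ 2 • (1 : Matrix (Fin m) (Fin m) ℝ) - Dᵀ * D)
    (Hγ : Matrix (Fin n ⊕ Fin n) (Fin n ⊕ Fin n) ℝ)
    (hH : Hγ = Matrix.fromBlocks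
        (A + B * R⁻¹ * Dᵀ * C) (B * R⁻¹ * Bᵀ)
        (-(Cᵀ * ((1 : Matrix (Fin p) (Fin p) ℝ) + D * R⁻¹ * Dᵀ) * C))
        (-(A + B * R⁻¹ * Dᵀ * C)ᵀ))
    (Gc : ℝ → Matrix (Fin p) (Fin m) ℂ)
    (hGc : ∀ ω : ℝ, Gc ω =
        C.map (algebraMap ℝ ℂ) *
          (((ω : ℂ) * Complex.I) • (1 : Matrix (Fin n) (Fin n) ℂ) - A.map (algebraMap ℝ ℂ))⁻¹ *
          B.map (algebraMap ℝ ℂ) + D.map (algebraMap ℝ ℂ)) :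
    ∀ ω : ℝ,
      (γ ^ 2 • (1 : Matrix (Fin m) (Fin m) ℂ) - (Gc ω)ᴴ * Gc ω).det = 0 ↔
        ((ω : ℂ) * Complex.I) ∈ spectrum ℂ (Hγ.map (algebraMap ℝ ℂ)) := by
  intro ω
  classical
  set s : ℂ := (ω : ℂ) * Complex.I with hs
  set Ac := A.map (algebraMap ℝ ℂ) with hAc
  set Bc := B.map (algebraMap ℝ ℂ) with hBc
  set Cc := C.map (algebraMap ℝ ℂ) with hCc
  set Dc := D.map (algebraMap ℝ ℂ) with hDc
  set Rc := R.map (algebraMap ℝ ℂ) with hRc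
  -- basic invertibility facts
  have hRdet : R.det ≠ 0 := by rw [hR]; exact aux_Rdet D γ hγ hγD
  have hRu : IsUnit R.det := isUnit_iff_ne_zero.2 hRdet
  have hRcdet : Rc.det ≠ 0 := by
    have : (algebraMap ℝ ℂ) R.det = Rc.det := by
      rw [RingHom.map_det]; rfl
    rw [← this]
    simpa using hRdet
  have hRcu : IsUnit Rc.det := isUnit_iff_ne_zero.2 hRcdet
  have hRmapinv : (R⁻¹).map (algebraMap ℝ ℂ) = Rc⁻¹ := by
    refine (Matrix.inv_eq_right_inv ?_).symm
    rw [hRc, ← Matrix.map_mul, Matrix.mul_nonsing_inv _ hRu, mapC_one]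
  have hRT : Rᵀ = R := by
    rw [hR]; simp [Matrix.transpose_sub, Matrix.transpose_smul, Matrix.transpose_mul]
  have hRcT : Rcᵀ = Rc := by rw [hRc, ← Matrix.transpose_map, hRT]
  have hRcinvT : (Rc⁻¹)ᵀ = Rc⁻¹ := by rw [Matrix.transpose_nonsing_inv, hRcT]
  have hRmap : Rc = γ ^ 2 • (1 : Matrix (Fin m) (Fin m) ℂ) - Dcᵀ * Dc := by
    rw [hRc, hR, mapC_sub, mapC_smul, mapC_one, Matrix.map_mul, ← Matrix.transpose_map, hDc]
  -- X and Y
  set X := s • (1 : Matrix (Fin n) (Fin n) ℂ) - Ac with hX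
  set Y := s • (1 : Matrix (Fin n) (Fin n) ℂ) + Acᵀ with hY
  have hXdet : X.det ≠ 0 := by
    have h := hA ω
    rw [aux_spec_det] at h
    rw [hX]; exact h
  have hYdet : Y.det ≠ 0 := by
    have h := hA (-ω)
    rw [aux_spec_det] at h
    have hYT : Yᵀ = -((((-ω : ℝ) : ℂ) * Complex.I) • (1 : Matrix (Fin n) (Fin n) ℂ) - Ac) := by
      rw [hY, Matrix.transpose_add, Matrix.transpose_smul, Matrix.transpose_one,
        Matrix.transpose_transpose]
      push_cast
      rw [neg_mul, ← hs]
      module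
    intro h0
    apply h
    have := Matrix.det_transpose Y
    rw [hYT, Matrix.det_neg, h0] at this
    rcases mul_eq_zero.mp this with h1 | h1
    · exact absurd h1 (pow_ne_zero _ (by norm_num))
    · exact h1
  have hXu : IsUnit X.det := isUnit_iff_ne_zero.2 hXdet
  have hYu : IsUnit Y.det := isUnit_iff_ne_zero.2 hYdet
  -- block matrices
  set S := fromBlocks X 0 (Ccᵀ * Cc) Y with hS
  set V := fromBlocks X⁻¹ 0 (-(Y⁻¹ * (Ccᵀ * Cc) * X⁻¹)) Y⁻¹ with hV
  have hSV : S * V = 1 := by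
    rw [hS, hV, Matrix.fromBlocks_multiply]
    have e1 : X * X⁻¹ = 1 := Matrix.mul_nonsing_inv _ hXu
    have e2 : Y * Y⁻¹ = 1 := Matrix.mul_nonsing_inv _ hYu
    have e3 : Y * -(Y⁻¹ * (Ccᵀ * Cc) * X⁻¹) = -(Ccᵀ * Cc * X⁻¹) := by
      rw [Matrix.mul_neg, ← Matrix.mul_assoc, ← Matrix.mul_assoc, e2, Matrix.one_mul]
    rw [e1, e2, e3]
    simp [Matrix.fromBlocks_one]
  have hSdetne : S.det ≠ 0 := by
    rw [hS, Matrix.det_fromBlocks_zero₁₂]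
    exact mul_ne_zero hXdet hYdet
  set Bb := fromRows Bc (-(Ccᵀ * Dc)) with hBb
  set Cb := fromCols (-(Dcᵀ * Cc)) (-Bcᵀ) with hCb
  -- key structural identity
  have hE : s • (1 : Matrix (Fin n ⊕ Fin n) (Fin n ⊕ Fin n) ℂ) - Hγ.map (algebraMap ℝ ℂ)
      = S + Bb * Rc⁻¹ * Cb := by
    have hBRC : Bb * Rc⁻¹ * Cb = fromBlocks
        (Bc * Rc⁻¹ * -(Dcᵀ * Cc)) (Bc * Rc⁻¹ * -Bcᵀ)
        (-(Ccᵀ * Dc) * Rc⁻¹ * -(Dcᵀ * Cc)) (-(Ccᵀ * Dc) * Rc⁻¹ * -Bcᵀ) := by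
      rw [hBb, hCb, Matrix.fromRows_mul, Matrix.fromRows_mul_fromCols]
    have hone : (1 : Matrix (Fin n ⊕ Fin n) (Fin n ⊕ Fin n) ℂ)
        = fromBlocks 1 0 0 1 := Matrix.fromBlocks_one.symm
    rw [hH, Matrix.fromBlocks_map, hBRC, hS, hone, Matrix.fromBlocks_smul,
      fromBlocks_sub', Matrix.fromBlocks_add]
    simp only [smul_zero, mapC_add, mapC_neg, mapC_one, Matrix.map_mul,
      Matrix.transpose_map, hRmapinv, ← hAc, ← hBc, ← hCc, ← hDc]
    rw [Matrix.fromBlocks_inj]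
    refine ⟨?_, ?_, ?_, ?_⟩
    · rw [hX]
      simp only [Matrix.mul_neg, Matrix.neg_mul, Matrix.mul_assoc]
      try abel
    · simp only [Matrix.mul_neg, Matrix.neg_mul, Matrix.mul_assoc]
      try abel
    · simp only [zero_sub, neg_neg, Matrix.mul_add, Matrix.add_mul, Matrix.mul_one,
        Matrix.one_mul, Matrix.mul_neg, Matrix.neg_mul, Matrix.mul_assoc]
      try abel
    · rw [hY]
      simp only [sub_neg_eq_add, Matrix.transpose_add, Matrix.transpose_mul,
        Matrix.transpose_transpose, hRcinvT, Matrix.mul_neg, Matrix.neg_mul, neg_neg,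
        Matrix.mul_assoc]
      try abel
  -- conjugate transpose of Gc
  have hGH : (Gc ω)ᴴ = Dcᵀ - Bcᵀ * Y⁻¹ * Ccᵀ := by
    have hconjs : (star s : ℂ) = -s := by
      rw [hs]; simp
    have hXH : Xᴴ = -Y := by
      rw [hX, hY, Matrix.conjTranspose_sub, Matrix.conjTranspose_smul,
        Matrix.conjTranspose_one, aux_conjT, ← hAc, hconjs]
      module
    have hXinvH : (X⁻¹)ᴴ = -(Y⁻¹) := by
      rw [Matrix.conjTranspose_nonsing_inv, hXH]
      refine Matrix.inv_eq_right_inv ?_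
      rw [neg_mul_neg, Matrix.mul_nonsing_inv _ hYu]
    have hBH : Bcᴴ = Bcᵀ := by rw [hBc]; exact aux_conjT B
    have hCH : Ccᴴ = Ccᵀ := by rw [hCc]; exact aux_conjT C
    have hDH : Dcᴴ = Dcᵀ := by rw [hDc]; exact aux_conjT D
    rw [hGc ω, ← hX]
    rw [Matrix.conjTranspose_add, Matrix.conjTranspose_mul, Matrix.conjTranspose_mul,
      hXinvH, hBH, hCH, hDH]
    simp only [Matrix.mul_neg, Matrix.neg_mul, Matrix.mul_assoc]
    abel
  -- the spectral factor identity
  have hPhi : Rc + Cb * (V * Bb)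
      = γ ^ 2 • (1 : Matrix (Fin m) (Fin m) ℂ) - (Gc ω)ᴴ * Gc ω := by
    rw [hGH, hGc ω, ← hX, hRmap, hV, hBb, hCb,
      Matrix.fromBlocks_mul_fromRows, Matrix.fromCols_mul_fromRows]
    simp only [Matrix.mul_add, Matrix.add_mul, Matrix.sub_mul, Matrix.mul_sub,
      Matrix.mul_neg, Matrix.neg_mul, Matrix.zero_mul, Matrix.mul_zero, Matrix.mul_assoc,
      sub_eq_add_neg, neg_add, neg_neg, add_zero, zero_add]
    abel
  -- determinant computation
  have hfinal : (s • (1 : Matrix (Fin n ⊕ Fin n) (Fin n ⊕ Fin n) ℂ)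
        - Hγ.map (algebraMap ℝ ℂ)).det
      = S.det * (Rc.det⁻¹ *
        (γ ^ 2 • (1 : Matrix (Fin m) (Fin m) ℂ) - (Gc ω)ᴴ * Gc ω).det) := by
    have h1 : s • (1 : Matrix (Fin n ⊕ Fin n) (Fin n ⊕ Fin n) ℂ) - Hγ.map (algebraMap ℝ ℂ)
        = S * (1 + (V * Bb) * (Rc⁻¹ * Cb)) := by
      have hhh : S * ((V * Bb) * (Rc⁻¹ * Cb)) = Bb * Rc⁻¹ * Cb := by
        rw [← Matrix.mul_assoc S (V * Bb) (Rc⁻¹ * Cb), ← Matrix.mul_assoc S V Bb, hSV,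
          Matrix.one_mul, ← Matrix.mul_assoc]
      rw [Matrix.mul_add, Matrix.mul_one, hhh, hE]
    rw [h1, Matrix.det_mul]
    congr 1
    rw [Matrix.det_one_add_mul_comm]
    have h2 : 1 + (Rc⁻¹ * Cb) * (V * Bb) = Rc⁻¹ * (Rc + Cb * (V * Bb)) := by
      rw [Matrix.mul_add, Matrix.nonsing_inv_mul _ hRcu, Matrix.mul_assoc]
    rw [h2, hPhi, Matrix.det_mul, Matrix.det_nonsing_inv, Ring.inverse_eq_inv]
  rw [aux_spec_det, hfinal]
  rw [mul_eq_zero, mul_eq_zero]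
  simp [hSdetne, inv_eq_zero, hRcdet]
end
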